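/- arXiv:2105.11027 — 3 statements merged into one kernel-verified Lean document; each statement's English description precedes it below -/
import Mathlib

section
/- Let q be odd and χ a nontrivial character of (F_q,+). Then: (1) any two irreducible complex representations of the Heisenberg group H(W), W = F_q^{2n}, with central character χ are isomorphic, and any such representation has dimension q^n; (2) if L' ≤ H(W) is a maximal abelian subgroup containing the center Z and χ' is any character of L' with χ'(0,t) = χ(t) for all t ∈ F_q, then the induced representation Ind_{L'}^{H(W)} χ' is irreducible with central character χ. -/
/-!
STATEMENT 1 (Stone–von Neumann–Mackey): (1) any two irreducible complex
representations of the Heisenberg group H(W), W = F_q^{2n}, with nontrivial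
central character χ are isomorphic and have dimension q^n; (2) for a maximal
abelian subgroup L' containing the center and any extension χ' of χ to L',
the induced representation Ind_{L'}^{H(W)} χ' is irreducible with central
character χ.
-/

open Matrix

set_option linter.unusedSectionVars false

namespace Stmt1

/-- The standard symplectic form on `W = F^n × F^n`:
`⟨(x,y),(x',y')⟩ = x·y' − y·x'`. -/
def symp {F : Type} [Field F] {n : ℕ} (u v : (Fin n → F) × (Fin n → F)) : F :=
  u.1 ⬝ᵥ v.2 - u.2 ⬝ᵥ v.1

/-- The Heisenberg group `H(W) = W ⊕ F` attached to `W = F^n × F^n`, with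
product `(w,t)·(w',t') = (w + w', t + t' + ½⟨w,w'⟩)`. -/
@[ext]
structure Heis (F : Type) [Field F] (n : ℕ) where
  w : (Fin n → F) × (Fin n → F)
  t : F

namespace Heis

variable {F : Type} [Field F] {n : ℕ}

instance : Mul (Heis F n) :=
  ⟨fun a b => ⟨a.w + b.w, a.t + b.t + (2 : F)⁻¹ * symp a.w b.w⟩⟩

instance : One (Heis F n) := ⟨⟨0, 0⟩⟩

instance : Inv (Heis F n) := ⟨fun a => ⟨-a.w, -a.t⟩⟩

lemma mul_w (a b : Heis F n) : (a * b).w = a.w + b.w := rfl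
lemma mul_t (a b : Heis F n) : (a * b).t = a.t + b.t + (2 : F)⁻¹ * symp a.w b.w := rfl
lemma one_w : (1 : Heis F n).w = 0 := rfl
lemma one_t : (1 : Heis F n).t = 0 := rfl
lemma inv_w (a : Heis F n) : (a⁻¹).w = -a.w := rfl
lemma inv_t (a : Heis F n) : (a⁻¹).t = -a.t := rfl

lemma symp_self (u : (Fin n → F) × (Fin n → F)) : symp u u = 0 := by
  simp [symp, dotProduct_comm]

instance : Group (Heis F n) where
  mul_assoc a b c := by
    refine Heis.ext ?_ ?_
    · simp [mul_w, add_assoc]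
    · simp only [mul_t, mul_w, symp, Prod.fst_add, Prod.snd_add,
        add_dotProduct, dotProduct_add]
      ring
  one_mul a := by
    refine Heis.ext ?_ ?_
    · simp [mul_w, one_w]
    · simp [mul_t, one_w, one_t, symp]
  mul_one a := by
    refine Heis.ext ?_ ?_
    · simp [mul_w, one_w]
    · simp [mul_t, one_w, one_t, symp]
  inv_mul_cancel a := by
    refine Heis.ext ?_ ?_
    · simp [mul_w, inv_w, one_w]
    · have h : symp (-a.w) a.w = 0 := by
        simp only [symp, Prod.fst_neg, Prod.snd_neg, neg_dotProduct]
        rw [dotProduct_comm]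
        ring
      simp [mul_t, inv_w, inv_t, one_t, h]

end Heis

/-- A representation `ρ` of the Heisenberg group has central character `χ` if
the central element `(0,t)` acts by the scalar `χ t`. -/
def HasCentralChar {F : Type} [Field F] {n : ℕ} {V : Type} [AddCommGroup V] [Module ℂ V]
    (ρ : Representation ℂ (Heis F n) V) (χ : AddChar F ℂ) : Prop :=
  ∀ t : F, ∀ v : V, ρ ⟨0, t⟩ v = χ t • v

/-- Irreducibility of a representation: the space is nonzero, and the only
invariant subspaces are `⊥` and `⊤`. -/
def IsIrred {G : Type} [Group G] {V : Type} [AddCommGroup V] [Module ℂ V]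
    (ρ : Representation ℂ G V) : Prop :=
  (∃ v : V, v ≠ 0) ∧
    ∀ p : Submodule ℂ V, (∀ g : G, ∀ v ∈ p, ρ g v ∈ p) → p = ⊥ ∨ p = ⊤

/-- Equivalence (isomorphism) of two representations of a group `G`. -/
def RepEquiv {G V₁ V₂ : Type} [Group G] [AddCommGroup V₁] [Module ℂ V₁]
    [AddCommGroup V₂] [Module ℂ V₂]
    (ρ₁ : Representation ℂ G V₁) (ρ₂ : Representation ℂ G V₂) : Prop :=
  ∃ e : V₁ ≃ₗ[ℂ] V₂, ∀ g v, e (ρ₁ g v) = ρ₂ g (e v)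

variable {F : Type} [Field F] {n : ℕ}

section Helpers

lemma symp_add_left (u v w : (Fin n → F) × (Fin n → F)) :
    symp (u + v) w = symp u w + symp v w := by
  simp only [symp, Prod.fst_add, Prod.snd_add, add_dotProduct]; ring

lemma symp_add_right (u v w : (Fin n → F) × (Fin n → F)) :
    symp u (v + w) = symp u v + symp u w := by
  simp only [symp, Prod.fst_add, Prod.snd_add, dotProduct_add]; ring

lemma symp_zero_left (v : (Fin n → F) × (Fin n → F)) : symp 0 v = 0 := by
  simp only [symp, Prod.fst_zero, Prod.snd_zero, zero_dotProduct,
    dotProduct_zero]; ring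

lemma symp_zero_right (v : (Fin n → F) × (Fin n → F)) : symp v 0 = 0 := by
  simp only [symp, Prod.fst_zero, Prod.snd_zero, zero_dotProduct,
    dotProduct_zero]; ring

lemma symp_skew (u v : (Fin n → F) × (Fin n → F)) : symp u v = - symp v u := by
  simp only [symp]
  rw [dotProduct_comm u.1 v.2, dotProduct_comm u.2 v.1]
  ring

lemma symp_smul_left (c : F) (u v : (Fin n → F) × (Fin n → F)) :
    symp (c • u) v = c * symp u v := by
  simp only [symp, Prod.smul_fst, Prod.smul_snd, smul_dotProduct, smul_eq_mul]; ring

lemma symp_smul_right (c : F) (u v : (Fin n → F) × (Fin n → F)) :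
    symp u (c • v) = c * symp u v := by
  simp only [symp, Prod.smul_fst, Prod.smul_snd, dotProduct_smul, smul_eq_mul]; ring

lemma symp_sub_left (u v w : (Fin n → F) × (Fin n → F)) :
    symp (u - v) w = symp u w - symp v w := by
  simp only [symp, Prod.fst_sub, Prod.snd_sub, sub_dotProduct]; ring

lemma symp_neg_left (u v : (Fin n → F) × (Fin n → F)) : symp (-u) v = - symp u v := by
  simp only [symp, Prod.fst_neg, Prod.snd_neg, neg_dotProduct]; ring

namespace Heis

lemma z_mul (c : F) (a : Heis F n) : (⟨0, c⟩ : Heis F n) * a = ⟨a.w, c + a.t⟩ := by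
  refine Heis.ext ?_ ?_
  · simp [mul_w]
  · simp [mul_t, symp_zero_left]

lemma mul_z (c : F) (a : Heis F n) : a * (⟨0, c⟩ : Heis F n) = ⟨a.w, a.t + c⟩ := by
  refine Heis.ext ?_ ?_
  · simp [mul_w]
  · simp [mul_t, symp_zero_right]

lemma z_comm (c : F) (a : Heis F n) :
    (⟨0, c⟩ : Heis F n) * a = a * (⟨0, c⟩ : Heis F n) := by
  rw [z_mul, mul_z, add_comm]

lemma decomp (a : Heis F n) : a = (⟨0, a.t⟩ : Heis F n) * ⟨a.w, 0⟩ := by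
  rw [z_mul]
  exact Heis.ext rfl (by simp)

/-- Conjugation in the Heisenberg group. -/
lemma conj_eq (h2 : (2:F) ≠ 0) (x a : Heis F n) :
    x * a * x⁻¹ = (⟨0, symp x.w a.w⟩ : Heis F n) * a := by
  refine Heis.ext ?_ ?_
  · show x.w + a.w + -x.w = 0 + a.w
    abel
  · rw [z_mul]
    show x.t + a.t + 2⁻¹ * symp x.w a.w + -x.t
        + 2⁻¹ * symp (x.w + a.w) (-x.w) = symp x.w a.w + a.t
    have h1 : symp (x.w + a.w) (-x.w)
        = symp x.w (-x.w) + symp a.w (-x.w) := symp_add_left _ _ _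
    have hx : symp x.w (-x.w) = 0 := by
      rw [show (-x.w) = (-1 : F) • x.w by simp, symp_smul_right, symp_self, mul_zero]
    have h3 : symp a.w (-x.w) = symp x.w a.w := by
      rw [show (-x.w) = (-1 : F) • x.w by simp, symp_smul_right, symp_skew x.w a.w]
      ring
    rw [h1, hx, h3]
    have e1 : (2:F)⁻¹ * symp x.w a.w + (2:F)⁻¹ * symp x.w a.w = symp x.w a.w := by
      field_simp
      try ring
    linear_combination e1

end Heis

variable (F n) in
instance instFintypeHeis [Fintype F] : Fintype (Heis F n) :=
  Fintype.ofEquiv (((Fin n → F) × (Fin n → F)) × F)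
    { toFun := fun p => ⟨p.1, p.2⟩
      invFun := fun h => (h.w, h.t)
      left_inv := fun _ => rfl
      right_inv := fun _ => rfl }

noncomputable instance [Fintype F] (L' : Subgroup (Heis F n)) : Fintype ↥L' :=
  Fintype.ofFinite _

lemma sum_monoidHom_eq_zero {G : Type*} [Group G] [Fintype G] (φ : G →* ℂ) (g₀ : G)
    (h : φ g₀ ≠ 1) : ∑ g, φ g = 0 := by
  have h1 : ∑ g, φ (g₀ * g) = ∑ g, φ g :=
    Fintype.sum_equiv (Equiv.mulLeft g₀) _ _ (fun g => rfl)
  have h2 : φ g₀ * ∑ g, φ g = ∑ g, φ g := by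
    rw [Finset.mul_sum, ← h1]
    exact Finset.sum_congr rfl (fun g _ => (map_mul φ g₀ g).symm)
  have h3 : (φ g₀ - 1) * ∑ g, φ g = 0 := by linear_combination h2
  rcases mul_eq_zero.mp h3 with h4 | h4
  · exact absurd (by linear_combination h4) h
  · exact h4

lemma sum_addChar_eq_zero {A : Type*} [AddGroup A] [Fintype A] (ψ : AddChar A ℂ) (a₀ : A)
    (h : ψ a₀ ≠ 1) : ∑ a, ψ a = 0 := by
  have h1 : ∑ a, ψ (a₀ + a) = ∑ a, ψ a :=
    Fintype.sum_equiv (Equiv.addLeft a₀) _ _ (fun a => rfl)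
  have h2 : ψ a₀ * ∑ a, ψ a = ∑ a, ψ a := by
    rw [Finset.mul_sum, ← h1]
    exact Finset.sum_congr rfl (fun a _ => (AddChar.map_add_eq_mul ψ a₀ a).symm)
  have h3 : (ψ a₀ - 1) * ∑ a, ψ a = 0 := by linear_combination h2
  rcases mul_eq_zero.mp h3 with h4 | h4
  · exact absurd (by linear_combination h4) h
  · exact h4

lemma two_ne_zero_of_odd_card [Fintype F] (hodd : Odd (Fintype.card F)) : (2 : F) ≠ 0 := by
  intro h2
  have h1 : (2 : ℕ) • (1 : F) = 0 := by
    rw [nsmul_eq_mul]; simpa using h2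
  have hdvd : addOrderOf (1 : F) ∣ 2 := addOrderOf_dvd_of_nsmul_eq_zero h1
  have hne : addOrderOf (1 : F) ≠ 1 := by
    simp only [ne_eq, AddMonoid.addOrderOf_eq_one_iff]
    exact one_ne_zero
  have h2' : addOrderOf (1 : F) = 2 :=
    Or.resolve_left ((Nat.dvd_prime Nat.prime_two).mp hdvd) hne
  have hcd : 2 ∣ Fintype.card F := h2' ▸ addOrderOf_dvd_card
  obtain ⟨k, hk⟩ := hodd
  obtain ⟨m, hm⟩ := hcd
  omega

end Helpers


/-- The space of the induced representation `Ind_{L'}^{H(W)} χ'`: functions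
`f : H(W) → ℂ` with `f (l * h) = χ'(l) * f h` for `l ∈ L'`. -/
noncomputable def indSpace (L' : Subgroup (Heis F n)) (χ' : ↥L' →* ℂ) :
    Submodule ℂ (Heis F n → ℂ) where
  carrier := {f | ∀ (l : ↥L') (h : Heis F n), f (↑l * h) = χ' l * f h}
  add_mem' := by
    intro f g hf hg l h
    simp [hf l h, hg l h, mul_add]
  zero_mem' := by intro l h; simp
  smul_mem' := by
    intro c f hf l h
    simp only [Pi.smul_apply, smul_eq_mul, hf l h]
    ring

/-- The induced representation `Ind_{L'}^{H(W)} χ'`, with `H(W)` acting by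
right translation. -/
noncomputable def indRep (L' : Subgroup (Heis F n)) (χ' : ↥L' →* ℂ) :
    Representation ℂ (Heis F n) ↥(indSpace L' χ') where
  toFun g :=
    { toFun := fun f => ⟨fun h => (f : Heis F n → ℂ) (h * g), by
        intro l h
        show (f : Heis F n → ℂ) (↑l * h * g) = χ' l * (f : Heis F n → ℂ) (h * g)
        rw [mul_assoc]
        exact f.2 l (h * g)⟩
      map_add' := by
        intro f g'
        refine Subtype.ext (funext fun h => ?_)
        simp
      map_smul' := by
        intro c f
        refine Subtype.ext (funext fun h => ?_)
        simp }
  map_one' := by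
    refine LinearMap.ext fun f => Subtype.ext (funext fun h => ?_)
    simp
  map_mul' := by
    intro g₁ g₂
    refine LinearMap.ext fun f => Subtype.ext (funext fun h => ?_)
    show (f : Heis F n → ℂ) (h * (g₁ * g₂)) = (f : Heis F n → ℂ) (h * g₁ * g₂)
    rw [mul_assoc]

--MAIN--

section Part2

open Classical in
/-- The delta function in `indSpace L' χ'` supported on the coset `L' * g`. -/
noncomputable def deltaFn (L' : Subgroup (Heis F n)) (χ' : ↥L' →* ℂ) (g : Heis F n) :
    ↥(indSpace L' χ') :=
  ⟨fun x => if h : x * g⁻¹ ∈ L' then χ' ⟨x * g⁻¹, h⟩ else 0, by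
    intro l x
    by_cases hm : x * g⁻¹ ∈ L'
    · have hm' : ↑l * x * g⁻¹ ∈ L' := by
        rw [mul_assoc]; exact mul_mem l.2 hm
      show (if h : ↑l * x * g⁻¹ ∈ L' then χ' ⟨↑l * x * g⁻¹, h⟩ else 0)
          = χ' l * (if h : x * g⁻¹ ∈ L' then χ' ⟨x * g⁻¹, h⟩ else 0)
      rw [dif_pos hm', dif_pos hm, ← _root_.map_mul]
      congr 1
      exact Subtype.ext (mul_assoc _ _ _)
    · have hm' : ¬ (↑l * x * g⁻¹ ∈ L') := by
        intro hmem
        apply hm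
        have h3 : x * g⁻¹ = (↑l)⁻¹ * (↑l * x * g⁻¹) := by group
        rw [h3]
        exact mul_mem (inv_mem l.2) hmem
      show (if h : ↑l * x * g⁻¹ ∈ L' then χ' ⟨↑l * x * g⁻¹, h⟩ else 0)
          = χ' l * (if h : x * g⁻¹ ∈ L' then χ' ⟨x * g⁻¹, h⟩ else 0)
      rw [dif_neg hm', dif_neg hm, mul_zero]⟩

open Classical in
lemma deltaFn_apply_eq (L' : Subgroup (Heis F n)) (χ' : ↥L' →* ℂ) {x g y : Heis F n}
    (hy : x * g⁻¹ = y) :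
    (deltaFn L' χ' g : Heis F n → ℂ) x = if h : y ∈ L' then χ' ⟨y, h⟩ else 0 := by
  subst hy
  simp only [deltaFn]

lemma part2 [Fintype F] (hodd : Odd (Fintype.card F)) (χ : AddChar F ℂ) (hχ : χ ≠ 1)
    (L' : Subgroup (Heis F n))
    (hab : ∀ a ∈ L', ∀ b ∈ L', a * b = b * a)
    (hmax : ∀ M : Subgroup (Heis F n), (∀ a ∈ M, ∀ b ∈ M, a * b = b * a) → L' ≤ M → M = L')
    (hZ : ∀ t : F, (⟨0, t⟩ : Heis F n) ∈ L') (χ' : ↥L' →* ℂ)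
    (hext : ∀ t : F, χ' ⟨⟨0, t⟩, hZ t⟩ = χ t) :
    IsIrred (indRep L' χ') ∧ HasCentralChar (indRep L' χ') χ := by
  classical
  have htwo : (2:F) ≠ 0 := two_ne_zero_of_odd_card hodd
  obtain ⟨c₁, hc₁⟩ : ∃ c, χ c ≠ 1 := by
    by_contra hc; push_neg at hc
    exact hχ (DFunLike.ext _ _ fun a => by rw [hc a, AddChar.one_apply])
  -- the symplectic form vanishes on (the image of) L'
  have hsymp0 : ∀ a ∈ L', ∀ b ∈ L', symp a.w b.w = 0 := by
    intro a ha b hb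
    have ht := congrArg Heis.t (hab a ha b hb)
    rw [Heis.mul_t, Heis.mul_t] at ht
    have key : (2:F)⁻¹ * symp a.w b.w = (2:F)⁻¹ * symp b.w a.w := by linear_combination ht
    rw [symp_skew b.w a.w] at key
    have h4 : (2:F) * symp a.w b.w = 0 := by
      have hinv : (2:F)⁻¹ ≠ 0 := inv_ne_zero htwo
      have h5 : (2:F)⁻¹ * (symp a.w b.w + symp a.w b.w) = 0 := by linear_combination key
      rcases mul_eq_zero.mp h5 with h6 | h6
      · exact absurd h6 hinv
      · linear_combination h6
    rcases mul_eq_zero.mp h4 with h6 | h6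
    · exact absurd h6 htwo
    · exact h6
  -- L' is closed under forgetting the central coordinate
  have hwmem : ∀ a ∈ L', (⟨a.w, 0⟩ : Heis F n) ∈ L' := by
    intro a ha
    have h1 : (⟨0, -a.t⟩ : Heis F n) * a = ⟨a.w, 0⟩ := by
      rw [Heis.z_mul]; exact Heis.ext rfl (by ring)
    rw [← h1]
    exact mul_mem (hZ _) ha
  -- the "perp ⊆ L'" property, from maximality
  have hperp : ∀ d : (Fin n → F) × (Fin n → F),
      (∀ a ∈ L', symp d a.w = 0) → (⟨d, 0⟩ : Heis F n) ∈ L' := by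
    intro d hd
    set S : Set (Heis F n) := ↑L' ∪ {⟨d, 0⟩} with hS
    have hcomm : ∀ x ∈ S, ∀ y ∈ S, x * y = y * x := by
      rintro x (hx | hx) y (hy | hy)
      · exact hab x hx y hy
      · rw [Set.mem_singleton_iff] at hy; subst hy
        refine Heis.ext (add_comm _ _) ?_
        have h1 : symp x.w d = 0 := by rw [symp_skew, hd x hx, neg_zero]
        show x.t + 0 + (2:F)⁻¹ * symp x.w (⟨d, 0⟩ : Heis F n).w
            = 0 + x.t + (2:F)⁻¹ * symp (⟨d, 0⟩ : Heis F n).w x.w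
        show x.t + 0 + (2:F)⁻¹ * symp x.w d = 0 + x.t + (2:F)⁻¹ * symp d x.w
        rw [h1, hd x hx]; ring
      · rw [Set.mem_singleton_iff] at hx; subst hx
        refine Heis.ext (add_comm _ _) ?_
        have h1 : symp y.w d = 0 := by rw [symp_skew, hd y hy, neg_zero]
        show 0 + y.t + (2:F)⁻¹ * symp d y.w = y.t + 0 + (2:F)⁻¹ * symp y.w d
        rw [h1, hd y hy]; ring
      · rw [Set.mem_singleton_iff] at hx hy; subst hx; subst hy; rfl
    have habM : ∀ a ∈ Subgroup.closure S, ∀ b ∈ Subgroup.closure S, a * b = b * a := by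
      intro a ha b hb
      refine Subgroup.closure_induction₂ (fun x y hx hy => hcomm x hx y hy)
        ?_ ?_ ?_ ?_ ?_ ?_ ha hb
      · intro x _; rw [one_mul, mul_one]
      · intro x _; rw [one_mul, mul_one]
      · intro x y z _ _ _ h1 h2; rw [mul_assoc, h2, ← mul_assoc, h1, mul_assoc]
      · intro y z x _ _ _ h1 h2; rw [← mul_assoc, h1, mul_assoc, h2, ← mul_assoc]
      · intro x y _ _ h1
        calc x⁻¹ * y = x⁻¹ * (y * x) * x⁻¹ := by group
        _ = x⁻¹ * (x * y) * x⁻¹ := by rw [← h1]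
        _ = y * x⁻¹ := by group
      · intro x y _ _ h1
        calc x * y⁻¹ = y⁻¹ * (y * x) * y⁻¹ := by group
        _ = y⁻¹ * (x * y) * y⁻¹ := by rw [h1]
        _ = y⁻¹ * x := by group
    have hM : Subgroup.closure S = L' :=
      hmax _ habM (fun x hx => Subgroup.subset_closure (Or.inl hx))
    have hmem : (⟨d, 0⟩ : Heis F n) ∈ Subgroup.closure S :=
      Subgroup.subset_closure (Or.inr rfl)
    rwa [hM] at hmem
  -- L' is closed under scaling the W-coordinate
  have hscale : ∀ (c : F), ∀ a ∈ L', (⟨c • a.w, 0⟩ : Heis F n) ∈ L' := by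
    intro c a ha
    apply hperp
    intro b hb
    rw [symp_smul_left, hsymp0 a ha b hb, mul_zero]
  -- orthogonality: the character sums
  have hSone : ∀ d : (Fin n → F) × (Fin n → F), (⟨d, 0⟩ : Heis F n) ∈ L' →
      ∀ l : ↥L', symp d (l : Heis F n).w = 0 := by
    intro d hd l
    exact hsymp0 _ hd _ l.2
  have hSsum : ∀ d : (Fin n → F) × (Fin n → F), (⟨d, 0⟩ : Heis F n) ∉ L' →
      ∑ l : ↥L', χ (symp d (l : Heis F n).w) = 0 := by
    intro d hmem
    have h1 : ∃ a : ↥L', symp d (a : Heis F n).w ≠ 0 := by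
      by_contra hno; push_neg at hno
      exact hmem (hperp d (fun a ha => hno ⟨a, ha⟩))
    obtain ⟨a, ha⟩ := h1
    set c := symp d (a : Heis F n).w with hc
    set φ : ↥L' →* ℂ :=
      { toFun := fun l => χ (symp d (l : Heis F n).w)
        map_one' := by
          show χ (symp d ((1 : ↥L') : Heis F n).w) = 1
          have hw : ((1 : ↥L') : Heis F n).w = 0 := rfl
          rw [hw, symp_zero_right, AddChar.map_zero_eq_one]
        map_mul' := by
          intro l₁ l₂
          show χ (symp d ((l₁ * l₂ : ↥L') : Heis F n).w)
              = χ (symp d (l₁ : Heis F n).w) * χ (symp d (l₂ : Heis F n).w)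
          have hw : ((l₁ * l₂ : ↥L') : Heis F n).w
              = (l₁ : Heis F n).w + (l₂ : Heis F n).w := rfl
          rw [hw, symp_add_right, AddChar.map_add_eq_mul] } with hφ
    set l₁ : ↥L' := ⟨⟨(c₁ * c⁻¹) • (a : Heis F n).w, 0⟩, hscale _ _ a.2⟩ with hl₁
    apply sum_monoidHom_eq_zero φ l₁
    show χ (symp d ((l₁ : Heis F n)).w) ≠ 1
    have h2 : (l₁ : Heis F n).w = (c₁ * c⁻¹) • (a : Heis F n).w := rfl
    rw [h2, symp_smul_right, ← hc]
    have h3 : c₁ * c⁻¹ * c = c₁ := by field_simp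
    rw [h3]
    exact hc₁
  -- central character
  have hcc : HasCentralChar (indRep L' χ') χ := by
    intro t f
    refine Subtype.ext (funext fun x => ?_)
    have h1 : (((indRep L' χ') ⟨0, t⟩ f : ↥(indSpace L' χ')) : Heis F n → ℂ) x
        = (f : Heis F n → ℂ) (x * ⟨0, t⟩) := rfl
    have h2 : (((χ t • f) : ↥(indSpace L' χ')) : Heis F n → ℂ) x
        = χ t * (f : Heis F n → ℂ) x := rfl
    rw [h1, h2, ← Heis.z_comm]
    have h3 := f.2 ⟨⟨0, t⟩, hZ t⟩ x
    rw [hext] at h3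
    exact h3
  refine ⟨⟨?_, ?_⟩, hcc⟩
  · -- nonzero
    refine ⟨deltaFn L' χ' 1, fun h0 => ?_⟩
    have hδ1 : (deltaFn L' χ' 1 : Heis F n → ℂ) 1 = 1 := by
      rw [deltaFn_apply_eq L' χ' (show (1 : Heis F n) * 1⁻¹ = 1 by group)]
      rw [dif_pos (one_mem L')]
      rw [show (⟨(1 : Heis F n), one_mem L'⟩ : ↥L') = 1 from rfl, _root_.map_one]
    have h00 : ((0 : ↥(indSpace L' χ')) : Heis F n → ℂ) 1 = 0 := rfl
    rw [h0, h00] at hδ1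
    exact zero_ne_one hδ1
  · -- invariant subspaces
    intro p hp
    by_cases hbot : p = ⊥
    · exact Or.inl hbot
    right
    obtain ⟨f, hfp, hf0⟩ := (Submodule.ne_bot_iff p).mp hbot
    have hfex : ∃ g₀, (f : Heis F n → ℂ) g₀ ≠ 0 := by
      by_contra h; push_neg at h
      exact hf0 (Subtype.ext (funext fun x => h x))
    obtain ⟨g₀, hg₀⟩ := hfex
    set Ef : ↥(indSpace L' χ') :=
      ∑ l : ↥L', (χ (-(symp g₀.w (l : Heis F n).w)) * χ' l⁻¹) • ((indRep L' χ') ↑l f)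
      with hEf
    have hEfp : Ef ∈ p :=
      Submodule.sum_mem _ (fun l _ => Submodule.smul_mem _ _ (hp ↑l f hfp))
    have hEfval : ∀ x : Heis F n, (Ef : Heis F n → ℂ) x
        = (∑ l : ↥L', χ (symp (x.w - g₀.w) (l : Heis F n).w)) * (f : Heis F n → ℂ) x := by
      intro x
      have hcoe : (Ef : Heis F n → ℂ) x
          = ∑ l : ↥L', (χ (-(symp g₀.w (l : Heis F n).w)) * χ' l⁻¹)
              * (f : Heis F n → ℂ) (x * ↑l) := by
        rw [hEf]
        simp only [AddSubmonoidClass.coe_finset_sum, Finset.sum_apply, SetLike.val_smul,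
          Pi.smul_apply, smul_eq_mul]
        rfl
      rw [hcoe, Finset.sum_mul]
      refine Finset.sum_congr rfl (fun l _ => ?_)
      set zl := symp x.w (l : Heis F n).w with hzl
      have hconj : x * ↑l = (⟨0, zl⟩ : Heis F n) * ↑l * x := by
        have hc := Heis.conj_eq htwo x ↑l
        calc x * ↑l = (x * ↑l * x⁻¹) * x := by group
        _ = _ := by rw [hc]
      have hfx : (f : Heis F n → ℂ) (x * ↑l)
          = χ zl * (χ' l * (f : Heis F n → ℂ) x) := by
        have h1 := f.2 ⟨⟨0, zl⟩, hZ zl⟩ (↑l * x)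
        have h2 := f.2 l x
        calc (f : Heis F n → ℂ) (x * ↑l)
            = (f : Heis F n → ℂ) ((⟨0, zl⟩ : Heis F n) * (↑l * x)) := by
              rw [hconj, mul_assoc]
        _ = χ' ⟨⟨0, zl⟩, hZ zl⟩ * (f : Heis F n → ℂ) (↑l * x) := h1
        _ = χ zl * (χ' l * (f : Heis F n → ℂ) x) := by rw [hext, h2]
      rw [hfx]
      have hinv : (χ' l⁻¹) * χ' l = 1 := by rw [← _root_.map_mul, inv_mul_cancel, _root_.map_one]
      have hadd : χ (-(symp g₀.w (l : Heis F n).w)) * χ zl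
          = χ (symp (x.w - g₀.w) (l : Heis F n).w) := by
        rw [symp_sub_left, sub_eq_neg_add]
        exact (AddChar.map_add_eq_mul χ _ _).symm
      calc (χ (-(symp g₀.w (l : Heis F n).w)) * χ' l⁻¹)
            * (χ zl * (χ' l * (f : Heis F n → ℂ) x))
          = (χ (-(symp g₀.w (l : Heis F n).w)) * χ zl) * ((χ' l⁻¹ * χ' l)
            * (f : Heis F n → ℂ) x) := by ring
      _ = _ := by rw [hadd, hinv, one_mul]
    -- the delta function at g₀ is in p
    have hcard : ((Fintype.card ↥L' : ℂ)) ≠ 0 := Nat.cast_ne_zero.mpr Fintype.card_ne_zero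
    have hδg₀ : deltaFn L' χ' g₀ ∈ p := by
      have hEq : Ef = ((Fintype.card ↥L' : ℂ) * (f : Heis F n → ℂ) g₀) • deltaFn L' χ' g₀ := by
        refine Subtype.ext (funext fun x => ?_)
        have hrhs : ((((Fintype.card ↥L' : ℂ) * (f : Heis F n → ℂ) g₀) • deltaFn L' χ' g₀ :
            ↥(indSpace L' χ')) : Heis F n → ℂ) x
            = ((Fintype.card ↥L' : ℂ) * (f : Heis F n → ℂ) g₀)
              * (deltaFn L' χ' g₀ : Heis F n → ℂ) x := rfl
        rw [hEfval x, hrhs, deltaFn_apply_eq L' χ' (rfl : x * g₀⁻¹ = x * g₀⁻¹)]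
        have hw : (x * g₀⁻¹).w = x.w - g₀.w := by
          rw [Heis.mul_w, Heis.inv_w, sub_eq_add_neg]
        by_cases hmem : x * g₀⁻¹ ∈ L'
        · rw [dif_pos hmem]
          have hdm : (⟨x.w - g₀.w, 0⟩ : Heis F n) ∈ L' := by
            rw [← hw]; exact hwmem _ hmem
          have hsum1 : ∑ l : ↥L', χ (symp (x.w - g₀.w) (l : Heis F n).w)
              = (Fintype.card ↥L' : ℂ) := by
            rw [show (Fintype.card ↥L' : ℂ) = ∑ _l : ↥L', (1:ℂ) by
              rw [Finset.sum_const, Finset.card_univ, nsmul_eq_mul, mul_one]]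
            refine Finset.sum_congr rfl (fun l _ => ?_)
            rw [hSone _ hdm l, AddChar.map_zero_eq_one]
          have hfx : (f : Heis F n → ℂ) x
              = χ' ⟨x * g₀⁻¹, hmem⟩ * (f : Heis F n → ℂ) g₀ := by
            have h1 := f.2 ⟨x * g₀⁻¹, hmem⟩ g₀
            have h2 : (x * g₀⁻¹) * g₀ = x := by group
            rw [h2] at h1
            exact h1
          rw [hsum1, hfx]
          ring
        · rw [dif_neg hmem]
          have hdm : (⟨x.w - g₀.w, 0⟩ : Heis F n) ∉ L' := by
            intro hmem2
            apply hmem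
            have hd : x * g₀⁻¹ = (⟨0, (x * g₀⁻¹).t⟩ : Heis F n) * ⟨x.w - g₀.w, 0⟩ := by
              rw [← hw]; exact Heis.decomp _
            rw [hd]
            exact mul_mem (hZ _) hmem2
          rw [hSsum _ hdm]
          ring
      have hne : (Fintype.card ↥L' : ℂ) * (f : Heis F n → ℂ) g₀ ≠ 0 :=
        mul_ne_zero hcard hg₀
      have hd2 : deltaFn L' χ' g₀
          = ((Fintype.card ↥L' : ℂ) * (f : Heis F n → ℂ) g₀)⁻¹ • Ef := by
        rw [hEq, smul_smul, inv_mul_cancel₀ hne, one_smul]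
      rw [hd2]
      exact Submodule.smul_mem _ _ hEfp
    -- all delta functions are in p
    have hδall : ∀ g : Heis F n, deltaFn L' χ' g ∈ p := by
      intro g
      have h1 : (indRep L' χ') (g⁻¹ * g₀) (deltaFn L' χ' g₀) = deltaFn L' χ' g := by
        refine Subtype.ext (funext fun x => ?_)
        have hl : (((indRep L' χ') (g⁻¹ * g₀) (deltaFn L' χ' g₀) :
            ↥(indSpace L' χ')) : Heis F n → ℂ) x
            = (deltaFn L' χ' g₀ : Heis F n → ℂ) (x * (g⁻¹ * g₀)) := rfl
        rw [hl, deltaFn_apply_eq L' χ' (show (x * (g⁻¹ * g₀)) * g₀⁻¹ = x * g⁻¹ by group),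
          deltaFn_apply_eq L' χ' (rfl : x * g⁻¹ = x * g⁻¹)]
      rw [← h1]
      exact hp _ _ hδg₀
    -- spanning
    refine Submodule.eq_top_iff'.mpr (fun φ => ?_)
    have hspan : φ = (Fintype.card ↥L' : ℂ)⁻¹ •
        ∑ g : Heis F n, (φ : Heis F n → ℂ) g • deltaFn L' χ' g := by
      refine Subtype.ext (funext fun x => ?_)
      have hrhs : (((Fintype.card ↥L' : ℂ)⁻¹ •
          ∑ g : Heis F n, (φ : Heis F n → ℂ) g • deltaFn L' χ' g :
          ↥(indSpace L' χ')) : Heis F n → ℂ) x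
          = (Fintype.card ↥L' : ℂ)⁻¹ *
            ∑ g : Heis F n, (φ : Heis F n → ℂ) g * (deltaFn L' χ' g : Heis F n → ℂ) x := by
        simp only [SetLike.val_smul, Pi.smul_apply, smul_eq_mul,
          AddSubmonoidClass.coe_finset_sum, Finset.sum_apply]
      rw [hrhs]
      have hre : ∑ g : Heis F n, (φ : Heis F n → ℂ) g * (deltaFn L' χ' g : Heis F n → ℂ) x
          = ∑ h : Heis F n, (if h ∈ L' then (φ : Heis F n → ℂ) x else 0) := by
        refine (Fintype.sum_equiv ((Equiv.inv (Heis F n)).trans (Equiv.mulRight x))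
          _ _ (fun h => ?_)).symm
        show (if h ∈ L' then (φ : Heis F n → ℂ) x else 0)
            = (φ : Heis F n → ℂ) (h⁻¹ * x) * (deltaFn L' χ' (h⁻¹ * x) : Heis F n → ℂ) x
        rw [deltaFn_apply_eq L' χ' (show x * (h⁻¹ * x)⁻¹ = h by group)]
        by_cases hm : h ∈ L'
        · rw [if_pos hm, dif_pos hm]
          have hphi := φ.2 (⟨h, hm⟩⁻¹ : ↥L') x
          rw [show ((⟨h, hm⟩⁻¹ : ↥L') : Heis F n) = h⁻¹ from rfl] at hphi
          rw [hphi]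
          have hone : χ' (⟨h, hm⟩⁻¹ : ↥L') * χ' ⟨h, hm⟩ = 1 := by
            rw [← _root_.map_mul, inv_mul_cancel, _root_.map_one]
          linear_combination (-((φ : Heis F n → ℂ) x)) * hone
        · rw [if_neg hm, dif_neg hm, mul_zero]
      have hcount : ∑ h : Heis F n, (if h ∈ L' then (φ : Heis F n → ℂ) x else 0)
          = (Fintype.card ↥L' : ℂ) * (φ : Heis F n → ℂ) x := by
        rw [← Finset.sum_filter]
        rw [Finset.sum_subtype (p := (· ∈ L')) (Finset.univ.filter (· ∈ L'))
          (by intro y; simp) (fun _ => (φ : Heis F n → ℂ) x)]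
        rw [Finset.sum_const, Finset.card_univ, nsmul_eq_mul]
      rw [hre, hcount, ← mul_assoc, inv_mul_cancel₀ hcard, one_mul]
    rw [hspan]
    exact Submodule.smul_mem _ _
      (Submodule.sum_mem _ (fun g _ => Submodule.smul_mem _ _ (hδall g)))

end Part2

section Part1

/-- The standard maximal abelian ("Lagrangian") subgroup `L₀ = {((x,0),t)}`. -/
def L0 (F : Type) [Field F] (n : ℕ) : Subgroup (Heis F n) where
  carrier := {h | h.w.2 = 0}
  mul_mem' := by
    intro a b ha hb
    show (a * b).w.2 = 0
    rw [Heis.mul_w, Prod.snd_add]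
    rw [show a.w.2 = 0 from ha, show b.w.2 = 0 from hb, add_zero]
  one_mem' := rfl
  inv_mem' := by
    intro a ha
    show (a⁻¹).w.2 = 0
    rw [Heis.inv_w, Prod.snd_neg, show a.w.2 = 0 from ha, neg_zero]

/-- Elements of `L₀`. -/
def mkL (x : Fin n → F) (t : F) : Heis F n := ⟨(x, 0), t⟩

lemma mkL_mem (x : Fin n → F) (t : F) : mkL x t ∈ L0 F n := rfl

lemma mkL_mul (x x' : Fin n → F) (t t' : F) :
    mkL x t * mkL x' t' = mkL (x + x') (t + t') := by
  refine Heis.ext ?_ ?_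
  · show (x, (0 : Fin n → F)) + (x', (0 : Fin n → F)) = (x + x', (0 : Fin n → F))
    rw [Prod.mk_add_mk, add_zero]
  · show t + t' + (2:F)⁻¹ * symp (x, (0 : Fin n → F)) (x', (0 : Fin n → F)) = t + t'
    have hs : symp (x, (0 : Fin n → F)) (x', (0 : Fin n → F)) = 0 := by
      simp [symp]
    rw [hs, mul_zero, add_zero]

lemma sympL0 {l m : Heis F n} (hl : l.w.2 = 0) (hm : m.w.2 = 0) : symp l.w m.w = 0 := by
  simp [symp, hl, hm]

/-- The character of `L₀` extending `χ`, trivial on the `x`-part. -/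
noncomputable def chi0 (χ : AddChar F ℂ) : ↥(L0 F n) →* ℂ where
  toFun l := χ (l : Heis F n).t
  map_one' := by
    show χ (1 : Heis F n).t = 1
    rw [Heis.one_t, AddChar.map_zero_eq_one]
  map_mul' := by
    intro a b
    show χ ((a : Heis F n) * (b : Heis F n)).t = χ (a : Heis F n).t * χ (b : Heis F n).t
    rw [Heis.mul_t, sympL0 a.2 b.2, mul_zero, add_zero, AddChar.map_add_eq_mul]

lemma L0_abelian : ∀ a ∈ L0 F n, ∀ b ∈ L0 F n, a * b = b * a := by
  intro a ha b hb
  refine Heis.ext (add_comm _ _) ?_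
  rw [Heis.mul_t, Heis.mul_t, sympL0 ha hb, sympL0 hb ha]
  ring

lemma L0_maximal (htwo : (2:F) ≠ 0) :
    ∀ M : Subgroup (Heis F n), (∀ a ∈ M, ∀ b ∈ M, a * b = b * a) → L0 F n ≤ M →
      M = L0 F n := by
  intro M habM hle
  ext m
  constructor
  swap
  · exact fun h => hle h
  intro hm
  show m.w.2 = 0
  funext i
  have haM : mkL (Pi.single i 1) 0 ∈ M := hle (mkL_mem _ _)
  have ht := congrArg Heis.t (habM m hm _ haM)
  rw [Heis.mul_t, Heis.mul_t] at ht
  have h1 : symp m.w ((mkL (Pi.single i (1:F)) 0).w) = - m.w.2 i := by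
    show symp m.w (Pi.single i 1, 0) = - m.w.2 i
    simp [symp, dotProduct_single]
  have h2 : symp ((mkL (Pi.single i (1:F)) 0).w) m.w = m.w.2 i := by
    rw [symp_skew, h1, neg_neg]
  rw [h1, h2] at ht
  have htt : (mkL (Pi.single i (1:F)) (0:F)).t = 0 := rfl
  rw [htt] at ht
  have h3 : (2:F)⁻¹ * (m.w.2 i + m.w.2 i) = 0 := by linear_combination - ht
  rcases mul_eq_zero.mp h3 with h4 | h4
  · exact absurd h4 (inv_ne_zero htwo)
  · have h5 : (2:F) * m.w.2 i = 0 := by linear_combination h4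
    rcases mul_eq_zero.mp h5 with h6 | h6
    · exact absurd h6 htwo
    · simpa using h6

lemma hZ0 : ∀ t : F, (⟨0, t⟩ : Heis F n) ∈ L0 F n := fun _ => rfl

lemma hext0 (χ : AddChar F ℂ) : ∀ t : F, chi0 χ ⟨⟨0, t⟩, hZ0 (F := F) (n := n) t⟩ = χ t := fun _ => rfl

end Part1

section Part1b

variable [Fintype F] {V : Type} [AddCommGroup V] [Module ℂ V]

/-- The projection onto the `ψ_b`-eigenspace for the action of `L₀`. -/
noncomputable def eproj (ρ : Representation ℂ (Heis F n) V) (χ : AddChar F ℂ)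
    (b : Fin n → F) (v : V) : V :=
  (((Fintype.card F : ℂ)) ^ (n+1))⁻¹ •
    ∑ p : (Fin n → F) × F, χ (-(p.2 + b ⬝ᵥ p.1)) • ρ (mkL p.1 p.2) v

lemma eproj_eigen (ρ : Representation ℂ (Heis F n) V) (χ : AddChar F ℂ)
    (b x₀ : Fin n → F) (t₀ : F) (v : V) :
    ρ (mkL x₀ t₀) (eproj ρ χ b v) = χ (t₀ + b ⬝ᵥ x₀) • eproj ρ χ b v := by
  unfold eproj
  rw [_root_.map_smul, _root_.map_sum, smul_comm (χ (t₀ + b ⬝ᵥ x₀))]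
  congr 1
  have hmul : ∀ (x : Fin n → F) (t : F), ρ (mkL x₀ t₀) (ρ (mkL x t) v)
      = ρ (mkL (x₀ + x) (t₀ + t)) v := by
    intro x t
    rw [← mkL_mul, _root_.map_mul]
    rfl
  calc ∑ p : (Fin n → F) × F, ρ (mkL x₀ t₀) (χ (-(p.2 + b ⬝ᵥ p.1)) • ρ (mkL p.1 p.2) v)
      = ∑ p : (Fin n → F) × F, χ (-(p.2 + b ⬝ᵥ p.1)) • ρ (mkL (x₀ + p.1) (t₀ + p.2)) v := by
        refine Finset.sum_congr rfl (fun p _ => ?_)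
        rw [_root_.map_smul, hmul]
  _ = ∑ p : (Fin n → F) × F, (χ (t₀ + b ⬝ᵥ x₀) * χ (-(p.2 + b ⬝ᵥ p.1))) • ρ (mkL p.1 p.2) v := by
        refine Fintype.sum_equiv
          (Equiv.prodCongr (Equiv.addLeft x₀) (Equiv.addLeft t₀)) _ _ (fun p => ?_)
        show χ (-(p.2 + b ⬝ᵥ p.1)) • ρ (mkL (x₀ + p.1) (t₀ + p.2)) v
            = (χ (t₀ + b ⬝ᵥ x₀) * χ (-((t₀ + p.2) + b ⬝ᵥ (x₀ + p.1)))) • ρ (mkL (x₀ + p.1) (t₀ + p.2)) v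
        congr 1
        rw [← AddChar.map_add_eq_mul]
        congr 1
        rw [dotProduct_add]
        ring
  _ = χ (t₀ + b ⬝ᵥ x₀) • ∑ p : (Fin n → F) × F, χ (-(p.2 + b ⬝ᵥ p.1)) • ρ (mkL p.1 p.2) v := by
        rw [Finset.smul_sum]
        refine Finset.sum_congr rfl (fun p _ => ?_)
        rw [smul_smul]

lemma eproj_sum (χ : AddChar F ℂ) (hχ : χ ≠ 1)
    (ρ : Representation ℂ (Heis F n) V) (hcc : HasCentralChar ρ χ) (v : V) :
    ∑ b : Fin n → F, eproj ρ χ b v = v := by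
  obtain ⟨c₁, hc₁⟩ : ∃ c, χ c ≠ 1 := by
    by_contra hc; push_neg at hc
    exact hχ (DFunLike.ext _ _ fun a => by rw [hc a, AddChar.one_apply])
  have hcF : ((Fintype.card F : ℂ)) ≠ 0 := Nat.cast_ne_zero.mpr Fintype.card_ne_zero
  -- inner character sums over b
  have hvanish : ∀ x : Fin n → F, x ≠ 0 → ∑ b : Fin n → F, χ (-(b ⬝ᵥ x)) = 0 := by
    intro x hx
    set ψ : AddChar (Fin n → F) ℂ :=
      { toFun := fun b => χ (-(b ⬝ᵥ x))
        map_zero_eq_one' := by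
          show χ (-((0 : Fin n → F) ⬝ᵥ x)) = 1
          rw [zero_dotProduct, neg_zero, AddChar.map_zero_eq_one]
        map_add_eq_mul' := by
          intro a b
          show χ (-((a + b) ⬝ᵥ x)) = χ (-(a ⬝ᵥ x)) * χ (-(b ⬝ᵥ x))
          rw [← AddChar.map_add_eq_mul]
          congr 1
          rw [add_dotProduct]
          ring } with hψ
    obtain ⟨i, hi⟩ : ∃ i, x i ≠ 0 := by
      by_contra hno; push_neg at hno
      exact hx (funext fun i => hno i)
    set b₀ : Fin n → F := (-c₁ * (x i)⁻¹) • (Pi.single i (1:F) : Fin n → F) with hb₀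
    have := sum_addChar_eq_zero ψ b₀ ?_
    · exact this
    · show χ (-(b₀ ⬝ᵥ x)) ≠ 1
      rw [hb₀]
      rw [smul_dotProduct, single_dotProduct, smul_eq_mul, one_mul]
      have harg : -(-c₁ * (x i)⁻¹ * x i) = c₁ := by field_simp
      rw [harg]
      exact hc₁
  -- now the main computation
  unfold eproj
  rw [← Finset.smul_sum, Finset.sum_comm]
  have h1 : ∀ p : (Fin n → F) × F,
      ∑ b : Fin n → F, χ (-(p.2 + b ⬝ᵥ p.1)) • ρ (mkL p.1 p.2) v
      = ((∑ b : Fin n → F, χ (-(b ⬝ᵥ p.1))) * χ (-p.2)) • ρ (mkL p.1 p.2) v := by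
    intro p
    rw [Finset.sum_mul, Finset.sum_smul]
    refine Finset.sum_congr rfl (fun b _ => ?_)
    congr 1
    rw [← AddChar.map_add_eq_mul]
    congr 1
    ring
  rw [Finset.sum_congr rfl (fun p _ => h1 p)]
  rw [Fintype.sum_prod_type]
  rw [Finset.sum_eq_single (0 : Fin n → F)]
  rotate_left
  · intro x _ hx
    refine Finset.sum_eq_zero (fun y _ => ?_)
    show ((∑ b : Fin n → F, χ (-(b ⬝ᵥ x))) * χ (-y)) • ρ (mkL x y) v = 0
    rw [hvanish x hx, zero_mul, zero_smul]
  · intro h0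
    exact absurd (Finset.mem_univ _) h0
  -- the x = 0 term
  have h2 : ∀ t : F, ((∑ b : Fin n → F, χ (-(b ⬝ᵥ (0 : Fin n → F)))) * χ (-t)) •
      ρ (mkL 0 t) v = (Fintype.card (Fin n → F) : ℂ) • v := by
    intro t
    have hz : ∑ b : Fin n → F, χ (-(b ⬝ᵥ (0 : Fin n → F)))
        = (Fintype.card (Fin n → F) : ℂ) := by
      rw [show (Fintype.card (Fin n → F) : ℂ) = ∑ _b : Fin n → F, (1:ℂ) by
        rw [Finset.sum_const, Finset.card_univ, nsmul_eq_mul, mul_one]]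
      refine Finset.sum_congr rfl (fun b _ => ?_)
      rw [dotProduct_zero, neg_zero, AddChar.map_zero_eq_one]
    have hmk : mkL (0 : Fin n → F) t = (⟨0, t⟩ : Heis F n) := rfl
    rw [hz, hmk, hcc t v, smul_smul, mul_assoc]
    congr 1
    rw [← AddChar.map_add_eq_mul, neg_add_cancel, AddChar.map_zero_eq_one, mul_one]
  have h3 : ∑ t : F, ((∑ b : Fin n → F, χ (-(b ⬝ᵥ ((0:Fin n → F), t).1)))
        * χ (-(((0:Fin n → F), t).2))) • ρ (mkL ((0:Fin n → F), t).1 ((0:Fin n → F), t).2) v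
      = ∑ _t : F, (Fintype.card (Fin n → F) : ℂ) • v :=
    Finset.sum_congr rfl (fun t _ => h2 t)
  rw [h3]
  rw [Finset.sum_const, Finset.card_univ, ← Nat.cast_smul_eq_nsmul ℂ, smul_smul, smul_smul]
  have hscal : (((Fintype.card F : ℂ)) ^ (n+1))⁻¹ * ((Fintype.card F : ℕ) : ℂ)
      * ((Fintype.card (Fin n → F) : ℕ) : ℂ) = 1 := by
    have hcfn : (Fintype.card (Fin n → F) : ℕ) = Fintype.card F ^ n := by
      rw [Fintype.card_fun, Fintype.card_fin]
    rw [hcfn]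
    push_cast
    rw [pow_succ]
    field_simp
  rw [hscal, one_smul]

end Part1b

section Part1c

variable [Fintype F] {V : Type} [AddCommGroup V] [Module ℂ V]

/-- The matrix-coefficient functional used to map into the induced representation. -/
noncomputable def lam (ρ : Representation ℂ (Heis F n) V) (χ : AddChar F ℂ)
    (μ : V →ₗ[ℂ] ℂ) (v : V) : ℂ :=
  ∑ p : (Fin n → F) × F, χ (-p.2) * μ (ρ (mkL p.1 p.2) v)

lemma lam_add (ρ : Representation ℂ (Heis F n) V) (χ : AddChar F ℂ)
    (μ : V →ₗ[ℂ] ℂ) (v w : V) :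
    lam ρ χ μ (v + w) = lam ρ χ μ v + lam ρ χ μ w := by
  unfold lam
  rw [← Finset.sum_add_distrib]
  refine Finset.sum_congr rfl (fun p _ => ?_)
  rw [map_add, map_add, mul_add]

lemma lam_smul (ρ : Representation ℂ (Heis F n) V) (χ : AddChar F ℂ)
    (μ : V →ₗ[ℂ] ℂ) (c : ℂ) (v : V) :
    lam ρ χ μ (c • v) = c * lam ρ χ μ v := by
  unfold lam
  rw [Finset.mul_sum]
  refine Finset.sum_congr rfl (fun p _ => ?_)
  rw [_root_.map_smul, _root_.map_smul, smul_eq_mul]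
  ring

lemma lam_equivariant (ρ : Representation ℂ (Heis F n) V) (χ : AddChar F ℂ)
    (μ : V →ₗ[ℂ] ℂ) (x₀ : Fin n → F) (t₀ : F) (v : V) :
    lam ρ χ μ (ρ (mkL x₀ t₀) v) = χ t₀ * lam ρ χ μ v := by
  unfold lam
  rw [Finset.mul_sum]
  refine Fintype.sum_equiv (Equiv.prodCongr (Equiv.addRight x₀) (Equiv.addRight t₀))
    _ _ (fun p => ?_)
  show χ (-p.2) * μ (ρ (mkL p.1 p.2) (ρ (mkL x₀ t₀) v))
      = χ t₀ * (χ (-(p.2 + t₀)) * μ (ρ (mkL (p.1 + x₀) (p.2 + t₀)) v))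
  have hmul : ρ (mkL p.1 p.2) (ρ (mkL x₀ t₀) v) = ρ (mkL (p.1 + x₀) (p.2 + t₀)) v := by
    rw [← mkL_mul, _root_.map_mul]
    rfl
  rw [hmul, ← mul_assoc]
  congr 1
  rw [← AddChar.map_add_eq_mul]
  congr 1
  ring

/-- `T v = (h ↦ λ(ρ(h)v))`, the intertwiner into the induced representation. -/
noncomputable def Tfun (ρ : Representation ℂ (Heis F n) V) (χ : AddChar F ℂ)
    (μ : V →ₗ[ℂ] ℂ) (v : V) : Heis F n → ℂ := fun h => lam ρ χ μ (ρ h v)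

lemma Tfun_mem (ρ : Representation ℂ (Heis F n) V) (χ : AddChar F ℂ)
    (μ : V →ₗ[ℂ] ℂ) (v : V) : Tfun ρ χ μ v ∈ indSpace (L0 F n) (chi0 χ) := by
  intro l h
  show lam ρ χ μ (ρ (↑l * h) v) = chi0 χ l * lam ρ χ μ (ρ h v)
  have hl2 : ((l : Heis F n)).w.2 = 0 := l.2
  have hl : (l : Heis F n) = mkL (l : Heis F n).w.1 (l : Heis F n).t := by
    refine Heis.ext ?_ rfl
    exact Prod.ext rfl hl2
  rw [_root_.map_mul, Module.End.mul_apply, hl, lam_equivariant]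
  rfl

lemma exists_equiv_ind (hodd : Odd (Fintype.card F)) (χ : AddChar F ℂ) (hχ : χ ≠ 1)
    (ρ : Representation ℂ (Heis F n) V) (hirr : IsIrred ρ) (hcc : HasCentralChar ρ χ) :
    RepEquiv ρ (indRep (L0 F n) (chi0 χ)) := by
  have htwo : (2:F) ≠ 0 := two_ne_zero_of_odd_card hodd
  obtain ⟨u, hu⟩ := hirr.1
  -- find a nonzero eigenvector for some ψ_b
  obtain ⟨b, hb⟩ : ∃ b : Fin n → F, eproj ρ χ b u ≠ 0 := by
    by_contra hno; push_neg at hno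
    apply hu
    rw [← eproj_sum χ hχ ρ hcc u]
    exact (Finset.sum_congr rfl (fun b _ => hno b)).trans Finset.sum_const_zero
  set w₁ := eproj ρ χ b u with hw₁
  have heig : ∀ (x : Fin n → F) (t : F), ρ (mkL x t) w₁ = χ (t + b ⬝ᵥ x) • w₁ :=
    fun x t => eproj_eigen ρ χ b x t u
  -- translate to the ψ_0 eigenspace
  set g : Heis F n := ⟨((0 : Fin n → F), -b), 0⟩ with hg
  set v₀ := ρ g w₁ with hv₀def
  have hv₀ : v₀ ≠ 0 := by
    intro h0
    apply hb
    have h1 : ρ g⁻¹ (ρ g w₁) = w₁ := by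
      rw [← Module.End.mul_apply, ← _root_.map_mul, inv_mul_cancel, _root_.map_one,
        Module.End.one_apply]
    rw [← h1, ← hv₀def, h0, map_zero]
  have heig0 : ∀ (x : Fin n → F) (t : F), ρ (mkL x t) v₀ = χ t • v₀ := by
    intro x t
    have hkey : mkL x t * g = g * mkL x (t - b ⬝ᵥ x) := by
      refine Heis.ext ?_ ?_
      · show (x, (0:Fin n → F)) + ((0:Fin n → F), -b) = ((0:Fin n → F), -b) + (x, (0:Fin n → F))
        rw [add_comm]
      · show t + 0 + (2:F)⁻¹ * symp (x, (0:Fin n → F)) ((0:Fin n → F), -b)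
            = 0 + (t - b ⬝ᵥ x) + (2:F)⁻¹ * symp ((0:Fin n → F), -b) (x, (0:Fin n → F))
        have hs1 : symp (x, (0:Fin n → F)) ((0:Fin n → F), -b) = -(x ⬝ᵥ b) := by
          simp [symp]
        have hs2 : symp ((0:Fin n → F), -b) (x, (0:Fin n → F)) = b ⬝ᵥ x := by
          simp [symp]
        rw [hs1, hs2]
        have hdc : x ⬝ᵥ b = b ⬝ᵥ x := dotProduct_comm x b
        have e1 : (2:F)⁻¹ * (b ⬝ᵥ x) + (2:F)⁻¹ * (b ⬝ᵥ x) = b ⬝ᵥ x := by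
          field_simp
          ring
        linear_combination - e1 - (2:F)⁻¹ * hdc
    calc ρ (mkL x t) v₀ = ρ (mkL x t * g) w₁ := by
          rw [_root_.map_mul, Module.End.mul_apply, hv₀def]
    _ = ρ g (ρ (mkL x (t - b ⬝ᵥ x)) w₁) := by
          rw [hkey, _root_.map_mul, Module.End.mul_apply]
    _ = χ t • v₀ := by
          rw [heig, _root_.map_smul, hv₀def]
          congr 2
          ring
  -- a functional not vanishing at v₀
  obtain ⟨μ, hμ⟩ : ∃ μ : Module.Dual ℂ V, μ v₀ ≠ 0 := by
    by_contra hno; push_neg at hno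
    exact hv₀ ((Module.forall_dual_apply_eq_zero_iff ℂ v₀).mp hno)
  -- the intertwiner
  set T : V →ₗ[ℂ] ↥(indSpace (L0 F n) (chi0 χ)) :=
    { toFun := fun v => ⟨Tfun ρ χ μ v, Tfun_mem ρ χ μ v⟩
      map_add' := by
        intro v w
        refine Subtype.ext (funext fun h => ?_)
        show lam ρ χ μ (ρ h (v + w)) = lam ρ χ μ (ρ h v) + lam ρ χ μ (ρ h w)
        rw [map_add, lam_add]
      map_smul' := by
        intro c v
        refine Subtype.ext (funext fun h => ?_)
        show lam ρ χ μ (ρ h (c • v)) = c * lam ρ χ μ (ρ h v)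
        rw [_root_.map_smul, lam_smul] } with hT
  have hTint : ∀ (g' : Heis F n) (v : V),
      T (ρ g' v) = (indRep (L0 F n) (chi0 χ)) g' (T v) := by
    intro g' v
    refine Subtype.ext (funext fun h => ?_)
    show lam ρ χ μ (ρ h (ρ g' v)) = lam ρ χ μ (ρ (h * g') v)
    rw [_root_.map_mul, Module.End.mul_apply]
  -- T v₀ is nonzero
  have hlamv₀ : lam ρ χ μ v₀ = (Fintype.card ((Fin n → F) × F) : ℂ) * μ v₀ := by
    unfold lam
    have h1 : ∀ p : (Fin n → F) × F, χ (-p.2) * μ (ρ (mkL p.1 p.2) v₀) = μ v₀ := by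
      intro p
      rw [heig0 p.1 p.2, _root_.map_smul, smul_eq_mul, ← mul_assoc, ← AddChar.map_add_eq_mul,
        neg_add_cancel, AddChar.map_zero_eq_one, one_mul]
    rw [Finset.sum_congr rfl (fun p _ => h1 p), Finset.sum_const, Finset.card_univ,
      nsmul_eq_mul]
  have hTv₀1 : (T v₀ : Heis F n → ℂ) 1 = (Fintype.card ((Fin n → F) × F) : ℂ) * μ v₀ := by
    show lam ρ χ μ (ρ 1 v₀) = _
    rw [_root_.map_one, Module.End.one_apply, hlamv₀]
  have hTv₀ : T v₀ ≠ 0 := by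
    intro h0
    have h1 : (T v₀ : Heis F n → ℂ) 1 = 0 := by rw [h0]; rfl
    rw [hTv₀1] at h1
    rcases mul_eq_zero.mp h1 with h2 | h2
    · exact Nat.cast_ne_zero.mpr Fintype.card_ne_zero h2
    · exact hμ h2
  -- kernel is trivial
  have hker : LinearMap.ker T = ⊥ := by
    rcases hirr.2 (LinearMap.ker T) (fun g' v hv => by
      rw [LinearMap.mem_ker] at hv ⊢
      rw [hTint, hv, map_zero]) with h | h
    · exact h
    · exfalso
      apply hTv₀
      exact LinearMap.mem_ker.mp (h ▸ Submodule.mem_top)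
  -- range is everything
  have hind := part2 hodd χ hχ (L0 F n) L0_abelian (L0_maximal htwo) hZ0 (chi0 χ) (hext0 χ)
  have hrange : LinearMap.range T = ⊤ := by
    rcases hind.1.2 (LinearMap.range T) (fun g' f hf => by
      obtain ⟨v, rfl⟩ := hf
      exact ⟨ρ g' v, hTint g' v⟩) with h | h
    · exfalso
      apply hTv₀
      have : T v₀ ∈ LinearMap.range T := ⟨v₀, rfl⟩
      rw [h] at this
      exact this
    · exact h
  exact ⟨LinearEquiv.ofBijective T ⟨LinearMap.ker_eq_bot.mp hker,
    LinearMap.range_eq_top.mp hrange⟩, fun g' v => hTint g' v⟩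

end Part1c

section Part1d

variable [Fintype F]

/-- Explicit parametrization of the induced space by functions on `F^n`. -/
noncomputable def Emap (χ : AddChar F ℂ) :
    ↥(indSpace (L0 F n) (chi0 χ)) ≃ₗ[ℂ] ((Fin n → F) → ℂ) where
  toFun f := fun y => (f : Heis F n → ℂ) ⟨(0, y), 0⟩
  map_add' f g := rfl
  map_smul' c f := rfl
  invFun φ := ⟨fun h => χ (h.t - (2:F)⁻¹ * (h.w.1 ⬝ᵥ h.w.2)) * φ h.w.2, by
    intro l h
    have hl2 : ((l : Heis F n)).w.2 = 0 := l.2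
    show χ (((l:Heis F n) * h).t - (2:F)⁻¹ * (((l:Heis F n) * h).w.1 ⬝ᵥ ((l:Heis F n) * h).w.2))
        * φ ((l:Heis F n) * h).w.2
        = chi0 χ l * (χ (h.t - (2:F)⁻¹ * (h.w.1 ⬝ᵥ h.w.2)) * φ h.w.2)
    have hw1 : ((l:Heis F n) * h).w.1 = (l:Heis F n).w.1 + h.w.1 := by
      rw [Heis.mul_w, Prod.fst_add]
    have hw2 : ((l:Heis F n) * h).w.2 = h.w.2 := by
      rw [Heis.mul_w, Prod.snd_add, hl2, zero_add]
    have hsymp : symp (l:Heis F n).w h.w = (l:Heis F n).w.1 ⬝ᵥ h.w.2 := by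
      simp [symp, hl2]
    have ht : ((l:Heis F n) * h).t
        = (l:Heis F n).t + h.t + (2:F)⁻¹ * ((l:Heis F n).w.1 ⬝ᵥ h.w.2) := by
      rw [Heis.mul_t, hsymp]
    rw [hw1, hw2, ht]
    have harg : (l:Heis F n).t + h.t + (2:F)⁻¹ * ((l:Heis F n).w.1 ⬝ᵥ h.w.2)
        - (2:F)⁻¹ * (((l:Heis F n).w.1 + h.w.1) ⬝ᵥ h.w.2)
        = (l:Heis F n).t + (h.t - (2:F)⁻¹ * (h.w.1 ⬝ᵥ h.w.2)) := by
      rw [add_dotProduct]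
      ring
    rw [harg, AddChar.map_add_eq_mul]
    have hchi : chi0 χ l = χ (l:Heis F n).t := rfl
    rw [hchi]
    ring⟩
  left_inv f := by
    refine Subtype.ext (funext fun h => ?_)
    have hprod : mkL h.w.1 (h.t - (2:F)⁻¹ * (h.w.1 ⬝ᵥ h.w.2)) * (⟨(0, h.w.2), 0⟩ : Heis F n)
        = h := by
      refine Heis.ext ?_ ?_
      · show (h.w.1, (0:Fin n → F)) + ((0:Fin n → F), h.w.2) = h.w
        rw [Prod.mk_add_mk, add_zero, zero_add]
      · show (h.t - (2:F)⁻¹ * (h.w.1 ⬝ᵥ h.w.2)) + 0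
            + (2:F)⁻¹ * symp (h.w.1, (0:Fin n → F)) ((0:Fin n → F), h.w.2) = h.t
        have hs : symp (h.w.1, (0:Fin n → F)) ((0:Fin n → F), h.w.2) = h.w.1 ⬝ᵥ h.w.2 := by
          simp [symp]
        rw [hs]; ring
    show χ (h.t - (2:F)⁻¹ * (h.w.1 ⬝ᵥ h.w.2)) * (f : Heis F n → ℂ) ⟨(0, h.w.2), 0⟩
        = (f : Heis F n → ℂ) h
    have hmem := f.2 ⟨mkL h.w.1 (h.t - (2:F)⁻¹ * (h.w.1 ⬝ᵥ h.w.2)), mkL_mem _ _⟩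
      (⟨(0, h.w.2), 0⟩ : Heis F n)
    rw [show (↑(⟨mkL h.w.1 (h.t - (2:F)⁻¹ * (h.w.1 ⬝ᵥ h.w.2)), mkL_mem _ _⟩ :
      ↥(L0 F n)) : Heis F n) = mkL h.w.1 (h.t - (2:F)⁻¹ * (h.w.1 ⬝ᵥ h.w.2)) from rfl,
      hprod] at hmem
    rw [hmem]
    rfl
  right_inv φ := by
    funext y
    show χ ((0:F) - (2:F)⁻¹ * ((0 : Fin n → F) ⬝ᵥ y)) * φ y = φ y
    rw [zero_dotProduct, mul_zero, sub_zero, AddChar.map_zero_eq_one, one_mul]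

lemma finrank_ind (χ : AddChar F ℂ) :
    Module.finrank ℂ ↥(indSpace (L0 F n) (chi0 χ)) = Fintype.card F ^ n := by
  rw [LinearEquiv.finrank_eq (Emap (F := F) (n := n) χ), Module.finrank_fintype_fun_eq_card,
    Fintype.card_fun, Fintype.card_fin]

lemma part1 (hodd : Odd (Fintype.card F)) (χ : AddChar F ℂ) (hχ : χ ≠ 1)
    {V₁ : Type} [AddCommGroup V₁] [Module ℂ V₁]
    {V₂ : Type} [AddCommGroup V₂] [Module ℂ V₂]
    (ρ₁ : Representation ℂ (Heis F n) V₁) (ρ₂ : Representation ℂ (Heis F n) V₂)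
    (h1 : IsIrred ρ₁) (h2 : IsIrred ρ₂) (h3 : HasCentralChar ρ₁ χ)
    (h4 : HasCentralChar ρ₂ χ) :
    RepEquiv ρ₁ ρ₂ ∧ Module.finrank ℂ V₁ = Fintype.card F ^ n := by
  obtain ⟨e₁, he₁⟩ := exists_equiv_ind hodd χ hχ ρ₁ h1 h3
  obtain ⟨e₂, he₂⟩ := exists_equiv_ind hodd χ hχ ρ₂ h2 h4
  constructor
  · refine ⟨e₁.trans e₂.symm, fun g v => ?_⟩
    rw [LinearEquiv.trans_apply, LinearEquiv.trans_apply, he₁]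
    have h5 := he₂ g (e₂.symm (e₁ v))
    rw [e₂.apply_symm_apply] at h5
    rw [← h5, e₂.symm_apply_apply]
  · rw [e₁.finrank_eq, finrank_ind]

end Part1d

/-- Theorem 5.1.2, Stone–von Neumann–Mackey. -/
theorem stone_vonNeumann_mackey
    (F : Type) [Field F] [Fintype F] (hodd : Odd (Fintype.card F))
    (n : ℕ) (χ : AddChar F ℂ) (hχ : χ ≠ 1) :
    -- (1) uniqueness up to equivalence, and the dimension is q^n
    (∀ (V₁ : Type) [AddCommGroup V₁] [Module ℂ V₁] [FiniteDimensional ℂ V₁]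
      (V₂ : Type) [AddCommGroup V₂] [Module ℂ V₂] [FiniteDimensional ℂ V₂]
      (ρ₁ : Representation ℂ (Heis F n) V₁) (ρ₂ : Representation ℂ (Heis F n) V₂),
      IsIrred ρ₁ → IsIrred ρ₂ → HasCentralChar ρ₁ χ → HasCentralChar ρ₂ χ →
        RepEquiv ρ₁ ρ₂ ∧ Module.finrank ℂ V₁ = Fintype.card F ^ n) ∧
    -- (2) irreducibility of the induced representation from a maximal abelian
    -- subgroup L' containing the center, for any extension χ' of χ
    (∀ L' : Subgroup (Heis F n),
      (∀ a ∈ L', ∀ b ∈ L', a * b = b * a) →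
      (∀ M : Subgroup (Heis F n), (∀ a ∈ M, ∀ b ∈ M, a * b = b * a) → L' ≤ M → M = L') →
      ∀ (hZ : ∀ t : F, (⟨0, t⟩ : Heis F n) ∈ L') (χ' : ↥L' →* ℂ),
        (∀ t : F, χ' ⟨⟨0, t⟩, hZ t⟩ = χ t) →
        IsIrred (indRep L' χ') ∧ HasCentralChar (indRep L' χ') χ) := by
  constructor
  · intro V₁ _ _ _ V₂ _ _ _ ρ₁ ρ₂ h1 h2 h3 h4
    exact part1 hodd χ hχ ρ₁ ρ₂ h1 h2 h3 h4
  · intro L' hab hmax hZ χ' hext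
    exact part2 hodd χ hχ L' hab hmax hZ χ' hext

end Stmt1
end

section
/- Let π be a finite-dimensional complex representation of GL_n(F_q) of U-rank k with k < (n−1)/2, and let m ≤ n satisfy k < (m−1)/2. Embed GL_m(F_q) in GL_n(F_q) as the top-left m×m block, extended by the identity matrix. Then the restriction of π to GL_m(F_q) has U-rank k (as a representation of GL_m(F_q)). -/
/-!
STATEMENT 8: If π is a representation of GL_n(F_q) of U-rank k with k < (n−1)/2,
and m ≤ n with k < (m−1)/2, then the restriction of π to GL_m(F_q) (embedded as
the top-left m×m block extended by the identity) has U-rank k.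
-/

open Matrix
open scoped MatrixGroups

set_option linter.unusedSectionVars false

namespace Stmt8

variable {F : Type} [Field F] [Fintype F] [DecidableEq F]

/-- The `n × n` matrix with the `a × b` matrix `X` placed in the block occupying
rows `0,…,a-1` and columns `n-b,…,n-1`, and `0` elsewhere. -/
def blockEmbed (n a b : ℕ) (X : Matrix (Fin a) (Fin b) F) : Matrix (Fin n) (Fin n) F :=
  Matrix.of fun i j =>
    if hi : (i : ℕ) < a then
      if hj : n - b ≤ (j : ℕ) ∧ (j : ℕ) - (n - b) < b then
        X ⟨i, hi⟩ ⟨(j : ℕ) - (n - b), hj.2⟩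
      else 0
    else 0

lemma blockEmbed_mul_blockEmbed {n a b : ℕ} (hab : a + b ≤ n)
    (X Y : Matrix (Fin a) (Fin b) F) :
    blockEmbed n a b X * blockEmbed n a b Y = 0 := by
  ext i j
  rw [Matrix.mul_apply, Matrix.zero_apply]
  apply Finset.sum_eq_zero
  intro k _
  rcases Nat.lt_or_ge (k : ℕ) a with hk | hk
  · have h2 : ¬ (n - b ≤ (k : ℕ) ∧ (k : ℕ) - (n - b) < b) := by
      rintro ⟨h, -⟩; omega
    have hz : blockEmbed n a b X i k = 0 := by
      unfold blockEmbed
      by_cases hi : (i : ℕ) < a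
      · rw [Matrix.of_apply, dif_pos hi, dif_neg h2]
      · rw [Matrix.of_apply, dif_neg hi]
    rw [hz, zero_mul]
  · have hz : blockEmbed n a b Y k j = 0 := by
      unfold blockEmbed
      rw [Matrix.of_apply, dif_neg (Nat.not_lt.2 hk)]
    rw [hz, mul_zero]

/-- The element `I_n + blockEmbed X` of `GL_n(F)`; for `a + b ≤ n` these elements
form the abelian subgroup `U_{a,b}` (identified with `(M_{a,b}(F), +)`). -/
def uU (n a b : ℕ) (hab : a + b ≤ n) (X : Matrix (Fin a) (Fin b) F) : GL (Fin n) F where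
  val := 1 + blockEmbed n a b X
  inv := 1 - blockEmbed n a b X
  val_inv := by
    have h := blockEmbed_mul_blockEmbed hab X X
    have e : (1 + blockEmbed n a b X) * (1 - blockEmbed n a b X)
        = 1 - blockEmbed n a b X * blockEmbed n a b X := by noncomm_ring
    rw [e, h, sub_zero]
  inv_val := by
    have h := blockEmbed_mul_blockEmbed hab X X
    have e : (1 - blockEmbed n a b X) * (1 + blockEmbed n a b X)
        = 1 - blockEmbed n a b X * blockEmbed n a b X := by noncomm_ring
    rw [e, h, sub_zero]

variable {V : Type} [AddCommGroup V] [Module ℂ V]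

/-- The character `γ_T` of `U_{a,b} ≅ M_{a,b}(F_q)`, `γ_T(X) = χ₀(trace (T*X))`,
appears in (the restriction to `U_{a,b}` of) the representation `π`, i.e. its
eigenspace is nonzero. -/
def CharAppears (χ₀ : AddChar F ℂ) {n : ℕ} (π : Representation ℂ (GL (Fin n) F) V)
    {a b : ℕ} (hab : a + b ≤ n) (T : Matrix (Fin b) (Fin a) F) : Prop :=
  ∃ v : V, v ≠ 0 ∧ ∀ X : Matrix (Fin a) (Fin b) F,
    π (uU n a b hab X) v = χ₀ ((T * X).trace) • v

/-- `rank_{a,b}(π) = k` : the maximal rank of a character of `U_{a,b}`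
appearing in `π|U_{a,b}` is `k`.  (The rank of `γ_T` is `rank T`.) -/
def HasRankAB (χ₀ : AddChar F ℂ) {n : ℕ} (π : Representation ℂ (GL (Fin n) F) V)
    {a b : ℕ} (hab : a + b ≤ n) (k : ℕ) : Prop :=
  (∃ T, CharAppears χ₀ π hab T ∧ T.rank = k) ∧
  (∀ T, CharAppears χ₀ π hab T → T.rank ≤ k)


/-- The `U`-rank of a representation `π` of `GL_n(F_q)` equals `k`:
this is `rank_{⌊n/2⌋,⌈n/2⌉}(π) = k`. -/
def HasURank (χ₀ : AddChar F ℂ) {n : ℕ} (π : Representation ℂ (GL (Fin n) F) V) (k : ℕ) : Prop :=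
  HasRankAB χ₀ π (show n / 2 + (n - n / 2) ≤ n by omega) k

/-- The multiplicative embedding `A ↦ fromBlocks A 0 0 1` of `m × m` matrices
into `(Fin m ⊕ Fin r) × (Fin m ⊕ Fin r)` matrices. -/
def blockDiagHom (m r : ℕ) : Matrix (Fin m) (Fin m) F →* Matrix (Fin m ⊕ Fin r) (Fin m ⊕ Fin r) F where
  toFun A := Matrix.fromBlocks A 0 0 1
  map_one' := Matrix.fromBlocks_one
  map_mul' := by
    intro A B
    rw [Matrix.fromBlocks_multiply]
    simp

/-- The standard embedding `GL_m(F) → GL_n(F)`, `A ↦ diag(A, I_{n-m})`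
(top-left `m × m` block, extended by the identity matrix). -/
def glEmbed {m n : ℕ} (h : m ≤ n) : GL (Fin m) F →* GL (Fin n) F :=
  Units.map
    (((Matrix.reindexAlgEquiv F F
        ((finSumFinEquiv (m := m) (n := n - m)).trans (finCongr (by omega)))).toRingEquiv.toMonoidHom).comp
      (blockDiagHom m (n - m)))


/-! ### Auxiliary development -/


/-- Selection matrix: `sel f p i = 1` iff `p = f i`. -/
def sel {p P : ℕ} (f : Fin p → Fin P) : Matrix (Fin P) (Fin p) F :=
  (1 : Matrix (Fin P) (Fin P) F).submatrix id f

lemma sel_apply {p P : ℕ} (f : Fin p → Fin P) (q : Fin P) (i : Fin p) :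
    (sel (F := F) f) q i = if q = f i then 1 else 0 := by
  simp [sel, Matrix.one_apply]

lemma sel_mul_sel {p q P : ℕ} (f : Fin q → Fin P) (g : Fin p → Fin q) :
    (sel (F := F) f) * (sel (F := F) g) = sel (f ∘ g) := by
  ext u t
  simp only [Matrix.mul_apply, sel_apply, Function.comp]
  rw [Finset.sum_eq_single (g t)]
  · simp
  · intro b _ hb; simp [hb, Ne.symm hb]
  · simp

lemma transpose_sel_mul_sel {p q P : ℕ} (f : Fin p → Fin P) (g : Fin q → Fin P) :
    (sel (F := F) f)ᵀ * (sel (F := F) g) = Matrix.of fun i j => if f i = g j then 1 else 0 := by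
  ext i j
  simp only [Matrix.mul_apply, Matrix.transpose_apply, sel_apply, Matrix.of_apply]
  rw [Finset.sum_eq_single (f i)]
  · simp [eq_comm]
  · intro b _ hb; rw [if_neg hb, zero_mul]
  · simp

lemma transpose_sel_mul_sel_of_inj {p P : ℕ} (f : Fin p → Fin P) (hf : Function.Injective f) :
    (sel (F := F) f)ᵀ * (sel (F := F) f) = 1 := by
  rw [transpose_sel_mul_sel]
  ext i j
  simp [Matrix.one_apply, hf.eq_iff]

lemma transpose_sel_mul_sel_of_disjoint {p q P : ℕ} (f : Fin p → Fin P) (g : Fin q → Fin P)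
    (h : ∀ i j, f i ≠ g j) :
    (sel (F := F) f)ᵀ * (sel (F := F) g) = 0 := by
  rw [transpose_sel_mul_sel]
  ext i j
  simp [h i j]

/-- `(sel f)ᵀ * T * sel g = T.submatrix f g`. -/
lemma transpose_sel_mul_mul_sel {p q P Q : ℕ} (f : Fin p → Fin P) (g : Fin q → Fin Q)
    (T : Matrix (Fin P) (Fin Q) F) :
    (sel (F := F) f)ᵀ * T * (sel (F := F) g) = T.submatrix f g := by
  have h1 : (sel (F := F) f)ᵀ = (1 : Matrix (Fin P) (Fin P) F).submatrix f (Equiv.refl (Fin P)) := by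
    simp [sel, Matrix.transpose_submatrix, Matrix.transpose_one]
  have h2 : (sel (F := F) g) = (1 : Matrix (Fin Q) (Fin Q) F).submatrix (Equiv.refl (Fin Q)) g := by
    rfl
  rw [h1, h2, Matrix.one_submatrix_mul, Matrix.mul_submatrix_one]
  simp

lemma rank_submatrix_le' {p q P Q : ℕ} (f : Fin p → Fin P) (g : Fin q → Fin Q)
    (T : Matrix (Fin P) (Fin Q) F) :
    (T.submatrix f g).rank ≤ T.rank := by
  rw [← transpose_sel_mul_mul_sel]
  exact le_trans (Matrix.rank_mul_le_left _ _) (Matrix.rank_mul_le_right _ _)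


/-! ### Generalized block unipotents -/

/-- `X` scattered into rows `r` and columns `c`. -/
def place {n a b : ℕ} (r : Fin a → Fin n) (c : Fin b → Fin n)
    (X : Matrix (Fin a) (Fin b) F) : Matrix (Fin n) (Fin n) F :=
  sel (F := F) r * X * (sel (F := F) c)ᵀ

lemma place_add {n a b : ℕ} (r : Fin a → Fin n) (c : Fin b → Fin n)
    (X Y : Matrix (Fin a) (Fin b) F) :
    place r c (X + Y) = place r c X + place r c Y := by
  simp [place, Matrix.mul_add, Matrix.add_mul]

lemma place_mul_place {n a b : ℕ} (r : Fin a → Fin n) (c : Fin b → Fin n)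
    (hd : ∀ i j, r i ≠ c j) (X Y : Matrix (Fin a) (Fin b) F) :
    place r c X * place r c Y = 0 := by
  have h0 : (sel (F := F) c)ᵀ * (sel (F := F) r) = 0 :=
    transpose_sel_mul_sel_of_disjoint c r (fun j i => (hd i j).symm)
  calc place r c X * place r c Y
      = sel (F := F) r * X * ((sel (F := F) c)ᵀ * sel (F := F) r) * Y * (sel (F := F) c)ᵀ := by
        simp only [place, Matrix.mul_assoc]
    _ = 0 := by rw [h0]; simp [Matrix.mul_assoc]

/-- The generalized unipotent element `1 + place r c X`. -/
def uGen {n a b : ℕ} (r : Fin a → Fin n) (c : Fin b → Fin n) (hd : ∀ i j, r i ≠ c j)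
    (X : Matrix (Fin a) (Fin b) F) : GL (Fin n) F where
  val := 1 + place r c X
  inv := 1 - place r c X
  val_inv := by
    have h := place_mul_place r c hd X X
    have e : (1 + place r c X) * (1 - place r c X)
        = 1 - place r c X * place r c X := by noncomm_ring
    rw [e, h, sub_zero]
  inv_val := by
    have h := place_mul_place r c hd X X
    have e : (1 - place r c X) * (1 + place r c X)
        = 1 - place r c X * place r c X := by noncomm_ring
    rw [e, h, sub_zero]

lemma uGen_mul {n a b : ℕ} (r : Fin a → Fin n) (c : Fin b → Fin n) (hd : ∀ i j, r i ≠ c j)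
    (X Y : Matrix (Fin a) (Fin b) F) :
    uGen r c hd X * uGen r c hd Y = uGen r c hd (X + Y) := by
  refine Units.ext ?_
  show (1 + place r c X) * (1 + place r c Y) = 1 + place r c (X + Y)
  have h := place_mul_place r c hd X Y
  rw [place_add]
  noncomm_ring [h]

lemma place_apply {n a b : ℕ} (r : Fin a → Fin n) (c : Fin b → Fin n)
    (X : Matrix (Fin a) (Fin b) F) (p q : Fin n) :
    place r c X p q = ∑ i, ∑ j, if p = r i ∧ q = c j then X i j else 0 := by
  calc place r c X p q
      = ∑ j, (∑ i, (if p = r i then 1 else 0) * X i j) * (if q = c j then 1 else 0) := by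
        simp [place, Matrix.mul_apply, sel_apply]
    _ = ∑ j, ∑ i, (if p = r i ∧ q = c j then X i j else 0) := by
        refine Finset.sum_congr rfl fun j _ => ?_
        rw [Finset.sum_mul]
        refine Finset.sum_congr rfl fun i _ => ?_
        by_cases h1 : p = r i <;> by_cases h2 : q = c j <;> simp [h1, h2]
    _ = _ := Finset.sum_comm

/-- The standard row embedding. -/
def rStd (n a : ℕ) (h : a ≤ n) : Fin a → Fin n := fun i => ⟨i, lt_of_lt_of_le i.2 h⟩

/-- The standard column embedding (last `b` coordinates). -/
def cStd (n b : ℕ) (h : b ≤ n) : Fin b → Fin n := fun j => ⟨n - b + j, by omega⟩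

lemma rStd_injective (n a : ℕ) (h : a ≤ n) : Function.Injective (rStd n a h) := by
  intro i j hij
  have := congrArg Fin.val hij
  simp only [rStd] at this
  exact Fin.ext this

lemma cStd_injective (n b : ℕ) (h : b ≤ n) : Function.Injective (cStd n b h) := by
  intro i j hij
  have := congrArg Fin.val hij
  simp only [cStd] at this
  exact Fin.ext (by omega)

lemma rStd_ne_cStd {n a b : ℕ} (hab : a + b ≤ n) (i : Fin a) (j : Fin b) :
    rStd n a (by omega) i ≠ cStd n b (by omega) j := by
  intro h
  have := congrArg Fin.val h
  simp only [rStd, cStd] at this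
  have hi := i.2
  have hj := j.2
  omega

lemma blockEmbed_eq_place {n a b : ℕ} (hab : a + b ≤ n) (X : Matrix (Fin a) (Fin b) F) :
    blockEmbed n a b X = place (rStd n a (by omega)) (cStd n b (by omega)) X := by
  ext p q
  rw [place_apply]
  show (if hi : (p : ℕ) < a then
      if hj : n - b ≤ (q : ℕ) ∧ (q : ℕ) - (n - b) < b then
        X ⟨p, hi⟩ ⟨(q : ℕ) - (n - b), hj.2⟩ else 0 else 0) = _
  by_cases hp : (p : ℕ) < a
  · rw [dif_pos hp]
    by_cases hq : n - b ≤ (q : ℕ) ∧ (q : ℕ) - (n - b) < b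
    · rw [dif_pos hq]
      rw [Finset.sum_eq_single (⟨(p : ℕ), hp⟩ : Fin a)]
      · rw [Finset.sum_eq_single (⟨(q : ℕ) - (n - b), hq.2⟩ : Fin b)]
        · rw [if_pos]
          refine ⟨Fin.ext ?_, Fin.ext ?_⟩
          · simp [rStd]
          · simp [cStd]; omega
        · intro j _ hj
          rw [if_neg]
          rintro ⟨-, h2⟩
          apply hj
          have := congrArg Fin.val h2
          simp only [cStd] at this
          apply Fin.ext
          simp
          omega
        · simp
      · intro i _ hi
        apply Finset.sum_eq_zero
        intro j _
        rw [if_neg]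
        rintro ⟨h1, -⟩
        apply hi
        have := congrArg Fin.val h1
        simp only [rStd] at this
        apply Fin.ext
        simpa using this.symm
      · simp
    · rw [dif_neg hq]
      symm
      apply Finset.sum_eq_zero
      intro i _
      apply Finset.sum_eq_zero
      intro j _
      rw [if_neg]
      rintro ⟨-, h2⟩
      have := congrArg Fin.val h2
      simp only [cStd] at this
      have hj := j.2
      omega
  · rw [dif_neg hp]
    symm
    apply Finset.sum_eq_zero
    intro i _
    apply Finset.sum_eq_zero
    intro j _
    rw [if_neg]
    rintro ⟨h1, -⟩
    have := congrArg Fin.val h1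
    simp only [rStd] at this
    have hi := i.2
    omega



/-! ### Permutation units and conjugation -/

lemma sel_transpose_perm {n : ℕ} (σ : Equiv.Perm (Fin n)) :
    (sel (F := F) ⇑σ)ᵀ = sel ⇑σ.symm := by
  ext i j
  simp only [Matrix.transpose_apply, sel_apply]
  refine if_congr ?_ rfl rfl
  constructor
  · intro h; rw [h]; simp
  · intro h; rw [h]; simp

/-- The permutation matrix of `σ` as an element of `GL n F`. -/
def permUnit {n : ℕ} (σ : Equiv.Perm (Fin n)) : GL (Fin n) F where
  val := sel ⇑σ
  inv := sel ⇑σ.symm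
  val_inv := by
    rw [sel_mul_sel]
    have : ⇑σ ∘ ⇑σ.symm = id := by ext x; simp
    rw [this]
    rfl
  inv_val := by
    rw [sel_mul_sel]
    have : ⇑σ.symm ∘ ⇑σ = id := by ext x; simp
    rw [this]
    rfl

lemma permUnit_conj_uGen {n a b : ℕ} (σ : Equiv.Perm (Fin n))
    (r : Fin a → Fin n) (c : Fin b → Fin n) (hd : ∀ i j, r i ≠ c j)
    (hd' : ∀ i j, (⇑σ ∘ r) i ≠ (⇑σ ∘ c) j)
    (X : Matrix (Fin a) (Fin b) F) :
    permUnit σ * uGen r c hd X * (permUnit σ)⁻¹ = uGen (⇑σ ∘ r) (⇑σ ∘ c) hd' X := by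
  refine Units.ext ?_
  show sel (F := F) ⇑σ * (1 + place r c X) * ((permUnit (F := F) σ)⁻¹).val = 1 + place (⇑σ ∘ r) (⇑σ ∘ c) X
  have hinv : ((permUnit (F := F) σ)⁻¹).val = sel (F := F) ⇑σ.symm := rfl
  rw [hinv]
  have h1 : sel (F := F) ⇑σ * sel (F := F) ⇑σ.symm = 1 := (permUnit (F := F) σ).val_inv
  have h2 : place (⇑σ ∘ r) (⇑σ ∘ c) X = sel (F := F) ⇑σ * place r c X * sel (F := F) ⇑σ.symm := by
    unfold place
    rw [← sel_mul_sel (F := F) ⇑σ r, ← sel_mul_sel (F := F) ⇑σ c, Matrix.transpose_mul, sel_transpose_perm]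
    simp only [Matrix.mul_assoc]
  rw [h2, Matrix.mul_add, Matrix.add_mul, Matrix.mul_one, h1]

/-! ### Characters appearing on generalized blocks -/

variable {V : Type} [AddCommGroup V] [Module ℂ V]

/-- `γ_T` appears in `π` restricted to the generalized block group at `(r, c)`. -/
def CharAppearsGen (χ₀ : AddChar F ℂ) {n : ℕ} (π : Representation ℂ (GL (Fin n) F) V)
    {a b : ℕ} (r : Fin a → Fin n) (c : Fin b → Fin n) (hd : ∀ i j, r i ≠ c j)
    (T : Matrix (Fin b) (Fin a) F) : Prop :=
  ∃ v : V, v ≠ 0 ∧ ∀ X : Matrix (Fin a) (Fin b) F,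
    π (uGen r c hd X) v = χ₀ ((T * X).trace) • v

lemma uU_eq_uGen {n a b : ℕ} (hab : a + b ≤ n) (X : Matrix (Fin a) (Fin b) F) :
    uU n a b hab X =
      uGen (rStd n a (by omega)) (cStd n b (by omega)) (rStd_ne_cStd hab) X := by
  refine Units.ext ?_
  show 1 + blockEmbed n a b X = 1 + place _ _ X
  rw [blockEmbed_eq_place hab]

lemma charAppears_iff_gen (χ₀ : AddChar F ℂ) {n : ℕ} (π : Representation ℂ (GL (Fin n) F) V)
    {a b : ℕ} (hab : a + b ≤ n) (T : Matrix (Fin b) (Fin a) F) :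
    CharAppears χ₀ π hab T ↔
      CharAppearsGen χ₀ π (rStd n a (by omega)) (cStd n b (by omega)) (rStd_ne_cStd hab) T := by
  unfold CharAppears CharAppearsGen
  refine exists_congr fun v => and_congr_right fun _ => forall_congr' fun X => ?_
  rw [uU_eq_uGen hab]

/-- Conjugation transport of appearing characters. -/
lemma charAppearsGen_perm (χ₀ : AddChar F ℂ) {n : ℕ} (π : Representation ℂ (GL (Fin n) F) V)
    {a b : ℕ} {r : Fin a → Fin n} {c : Fin b → Fin n} {hd : ∀ i j, r i ≠ c j}
    {T : Matrix (Fin b) (Fin a) F} (σ : Equiv.Perm (Fin n))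
    (hd' : ∀ i j, (⇑σ ∘ r) i ≠ (⇑σ ∘ c) j)
    (h : CharAppearsGen χ₀ π r c hd T) :
    CharAppearsGen χ₀ π (⇑σ ∘ r) (⇑σ ∘ c) hd' T := by
  obtain ⟨v, hv, hchar⟩ := h
  refine ⟨π (permUnit σ) v, ?_, ?_⟩
  · intro h0
    apply hv
    have : π (permUnit σ)⁻¹ (π (permUnit σ) v) = v := by
      rw [← Module.End.mul_apply, ← _root_.map_mul, inv_mul_cancel, _root_.map_one, Module.End.one_apply]
    rw [h0, map_zero] at this
    exact this.symm
  · intro X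
    have key : uGen (⇑σ ∘ r) (⇑σ ∘ c) hd' X * permUnit σ = permUnit σ * uGen r c hd X := by
      rw [← permUnit_conj_uGen σ r c hd hd' X]
      group
    calc π (uGen (⇑σ ∘ r) (⇑σ ∘ c) hd' X) (π (permUnit σ) v)
        = π (uGen (⇑σ ∘ r) (⇑σ ∘ c) hd' X * permUnit σ) v := by
          rw [_root_.map_mul]; rfl
      _ = π (permUnit σ * uGen r c hd X) v := by rw [key]
      _ = π (permUnit σ) (π (uGen r c hd X) v) := by rw [_root_.map_mul]; rfl
      _ = χ₀ ((T * X).trace) • π (permUnit σ) v := by rw [hchar X, _root_.map_smul]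

lemma uGen_comp {n a b a₂ b₂ : ℕ} (r : Fin a → Fin n) (c : Fin b → Fin n)
    (hd : ∀ i j, r i ≠ c j) (ι : Fin a₂ → Fin a) (κ : Fin b₂ → Fin b)
    (hd₂ : ∀ i j, (r ∘ ι) i ≠ (c ∘ κ) j) (X : Matrix (Fin a₂) (Fin b₂) F) :
    uGen (r ∘ ι) (c ∘ κ) hd₂ X = uGen r c hd (sel (F := F) ι * X * (sel (F := F) κ)ᵀ) := by
  refine Units.ext ?_
  show 1 + place (r ∘ ι) (c ∘ κ) X = 1 + place r c (sel (F := F) ι * X * (sel (F := F) κ)ᵀ)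
  unfold place
  rw [← sel_mul_sel r ι, ← sel_mul_sel c κ, Matrix.transpose_mul]
  simp only [Matrix.mul_assoc]

lemma trace_corner {a b a₂ b₂ : ℕ} (ι : Fin a₂ → Fin a) (κ : Fin b₂ → Fin b)
    (T : Matrix (Fin b) (Fin a) F) (X : Matrix (Fin a₂) (Fin b₂) F) :
    (T * (sel (F := F) ι * X * (sel (F := F) κ)ᵀ)).trace = (T.submatrix κ ι * X).trace := by
  have h : T * (sel (F := F) ι * X * (sel (F := F) κ)ᵀ) = (T * sel (F := F) ι * X) * (sel (F := F) κ)ᵀ := by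
    simp only [Matrix.mul_assoc]
  rw [h, Matrix.trace_mul_comm, ← Matrix.mul_assoc, ← Matrix.mul_assoc,
    transpose_sel_mul_mul_sel]

/-- Restricting an appearing character to a sub-block. -/
lemma charAppearsGen_corner (χ₀ : AddChar F ℂ) {n : ℕ} (π : Representation ℂ (GL (Fin n) F) V)
    {a b a₂ b₂ : ℕ} {r : Fin a → Fin n} {c : Fin b → Fin n} {hd : ∀ i j, r i ≠ c j}
    {T : Matrix (Fin b) (Fin a) F} (ι : Fin a₂ → Fin a) (κ : Fin b₂ → Fin b)
    (hd₂ : ∀ i j, (r ∘ ι) i ≠ (c ∘ κ) j)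
    (h : CharAppearsGen χ₀ π r c hd T) :
    CharAppearsGen χ₀ π (r ∘ ι) (c ∘ κ) hd₂ (T.submatrix κ ι) := by
  obtain ⟨v, hv, hchar⟩ := h
  refine ⟨v, hv, fun X => ?_⟩
  rw [uGen_comp r c hd ι κ hd₂ X, hchar, trace_corner]



/-! ### The characters `γ_T` -/

/-- `X ↦ trace (T * X)` as an additive monoid hom. -/
def traceHom {a b : ℕ} (T : Matrix (Fin b) (Fin a) F) : Matrix (Fin a) (Fin b) F →+ F where
  toFun X := (T * X).trace
  map_zero' := by simp
  map_add' X Y := by rw [Matrix.mul_add, Matrix.trace_add]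

/-- The character `γ_T` of `(M_{a,b}(F), +)`. -/
def gammaChar (χ₀ : AddChar F ℂ) {a b : ℕ} (T : Matrix (Fin b) (Fin a) F) :
    AddChar (Matrix (Fin a) (Fin b) F) ℂ :=
  χ₀.compAddMonoidHom (traceHom T)

lemma gammaChar_apply (χ₀ : AddChar F ℂ) {a b : ℕ} (T : Matrix (Fin b) (Fin a) F)
    (X : Matrix (Fin a) (Fin b) F) : gammaChar χ₀ T X = χ₀ ((T * X).trace) := rfl

lemma addChar_ne_zero (χ : AddChar F ℂ) (x : F) : χ x ≠ 0 := by
  intro h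
  have h1 : χ (-x) * χ x = 1 := by
    rw [← AddChar.map_add_eq_mul, neg_add_cancel, AddChar.map_zero_eq_one]
  rw [h, mul_zero] at h1
  exact zero_ne_one h1

lemma trace_mul_stdBasisMatrix {a b : ℕ} (T : Matrix (Fin b) (Fin a) F)
    (i : Fin a) (j : Fin b) (z : F) :
    (T * Matrix.single i j z).trace = T j i * z := by
  classical
  rw [Matrix.trace]
  rw [Finset.sum_eq_single j]
  · rw [Matrix.diag_apply, Matrix.mul_apply]
    rw [Finset.sum_eq_single i]
    · rw [Matrix.single_apply_same]
    · intro e _ he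
      rw [Matrix.single_apply_of_ne, mul_zero]
      tauto
    · simp
  · intro d _ hd
    rw [Matrix.diag_apply, Matrix.mul_apply]
    apply Finset.sum_eq_zero
    intro e _
    rw [Matrix.single_apply_of_ne, mul_zero]
    tauto
  · simp

lemma gammaChar_injective (χ₀ : AddChar F ℂ) (hχ₀ : χ₀ ≠ 1) {a b : ℕ} :
    Function.Injective (gammaChar χ₀ (a := a) (b := b)) := by
  intro T T' h
  by_contra hne
  have hS : ∃ j i, T j i ≠ T' j i := by
    by_contra hc
    push_neg at hc
    exact hne (by ext j i; exact hc j i)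
  obtain ⟨j, i, hji⟩ := hS
  apply hχ₀
  ext y
  rw [AddChar.one_apply]
  set w : F := (T j i - T' j i)⁻¹ * y with hw
  have hX := congrArg (fun ψ => ψ (Matrix.single i j w)) h
  simp only [gammaChar_apply, trace_mul_stdBasisMatrix] at hX
  have hT : T j i * w = T' j i * w + y := by
    have hdz : T j i - T' j i ≠ 0 := sub_ne_zero.mpr hji
    rw [hw, ← sub_eq_iff_eq_add', ← sub_mul, ← mul_assoc, mul_inv_cancel₀ hdz, one_mul]
  rw [hT, AddChar.map_add_eq_mul] at hX
  have := mul_left_cancel₀ (addChar_ne_zero χ₀ (T' j i * w)) (hX.trans (mul_one _).symm)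
  exact this

lemma gammaChar_surjective (χ₀ : AddChar F ℂ) (hχ₀ : χ₀ ≠ 1) {a b : ℕ} :
    Function.Surjective (gammaChar χ₀ (a := a) (b := b)) := by
  have hcard : Fintype.card (Matrix (Fin b) (Fin a) F)
      = Fintype.card (AddChar (Matrix (Fin a) (Fin b) F) ℂ) := by
    rw [AddChar.card_eq]
    exact Fintype.card_congr (Matrix.transposeAddEquiv (Fin b) (Fin a) F).toEquiv
  exact ((Fintype.bijective_iff_injective_and_card _).2
    ⟨gammaChar_injective χ₀ hχ₀, hcard⟩).2



/-! ### Common eigenvectors for commuting families -/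

lemma exists_common_eigenvector {V : Type} [AddCommGroup V] [Module ℂ V]
    [FiniteDimensional ℂ V] {ι : Type} [Fintype ι]
    (f : ι → Module.End ℂ V) (hcomm : ∀ i j, Commute (f i) (f j))
    (W : Submodule ℂ V) (hW : W ≠ ⊥) (hinv : ∀ i, ∀ w ∈ W, f i w ∈ W) :
    ∃ v, v ≠ 0 ∧ v ∈ W ∧ ∀ i, ∃ μ : ℂ, f i v = μ • v := by
  classical
  suffices h : ∀ s : Finset ι, ∃ W' : Submodule ℂ V, W' ≤ W ∧ W' ≠ ⊥ ∧
      (∀ i, ∀ w ∈ W', f i w ∈ W') ∧ ∀ i ∈ s, ∃ μ : ℂ, ∀ w ∈ W', f i w = μ • w by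
    obtain ⟨W', hle, hne, -, hs⟩ := h Finset.univ
    obtain ⟨v, hvW, hv0⟩ := Submodule.ne_bot_iff _ |>.mp hne
    refine ⟨v, hv0, hle hvW, fun i => ?_⟩
    obtain ⟨μ, hμ⟩ := hs i (Finset.mem_univ i)
    exact ⟨μ, hμ v hvW⟩
  intro s
  induction s using Finset.induction_on with
  | empty => exact ⟨W, le_rfl, hW, hinv, by simp⟩
  | @insert j s hj ih =>
    obtain ⟨W', hle, hne, hinv', hchar⟩ := ih
    have hmaps : ∀ w ∈ W', f j w ∈ W' := hinv' j
    let g : Module.End ℂ W' := (f j).restrict hmaps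
    haveI : Nontrivial W' := Submodule.nontrivial_iff_ne_bot.mpr hne
    obtain ⟨μ, hμ⟩ := Module.End.exists_eigenvalue g
    have hμ' : Module.End.eigenspace g μ ≠ ⊥ := hμ
    obtain ⟨w₀, hw₀mem, hw₀0⟩ := Submodule.ne_bot_iff _ |>.mp hμ'
    have hgw₀ : g w₀ = μ • w₀ := Module.End.mem_eigenspace_iff.mp hw₀mem
    refine ⟨W' ⊓ Module.End.eigenspace (f j) μ, inf_le_left.trans hle, ?_, ?_, ?_⟩
    · rw [Submodule.ne_bot_iff]
      refine ⟨(w₀ : V), Submodule.mem_inf.mpr ⟨w₀.2,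
        Module.End.mem_eigenspace_iff.mpr ?_⟩, by simpa using hw₀0⟩
      have := congrArg (Subtype.val) hgw₀
      simpa [g, LinearMap.restrict_apply] using this
    · intro i w hw
      obtain ⟨hw1, hw2⟩ := Submodule.mem_inf.mp hw
      refine Submodule.mem_inf.mpr ⟨hinv' i w hw1, Module.End.mem_eigenspace_iff.mpr ?_⟩
      have h1 : f j (f i w) = f i (f j w) := by
        have hco := (hcomm j i)
        calc f j (f i w) = (f j * f i) w := rfl
          _ = (f i * f j) w := by rw [hco]
          _ = f i (f j w) := rfl
      rw [h1, Module.End.mem_eigenspace_iff.mp hw2, _root_.map_smul]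
    · intro i hi
      rcases Finset.mem_insert.mp hi with rfl | his
      · exact ⟨μ, fun w hw => Module.End.mem_eigenspace_iff.mp (Submodule.mem_inf.mp hw).2⟩
      · obtain ⟨ν, hν⟩ := hchar i his
        exact ⟨ν, fun w hw => hν w (Submodule.mem_inf.mp hw).1⟩

/-! ### The extension lemma -/

lemma charAppearsGen_extend (χ₀ : AddChar F ℂ) (hχ₀ : χ₀ ≠ 1) {n : ℕ}
    (π : Representation ℂ (GL (Fin n) F) V) [FiniteDimensional ℂ V]
    {a b a₂ b₂ : ℕ} {r : Fin a → Fin n} {c : Fin b → Fin n} (hd : ∀ i j, r i ≠ c j)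
    (ι : Fin a₂ → Fin a) (κ : Fin b₂ → Fin b)
    {hd₂ : ∀ i j, (r ∘ ι) i ≠ (c ∘ κ) j} {T₂ : Matrix (Fin b₂) (Fin a₂) F}
    (h : CharAppearsGen χ₀ π (r ∘ ι) (c ∘ κ) hd₂ T₂) :
    ∃ T, CharAppearsGen χ₀ π r c hd T ∧ T.submatrix κ ι = T₂ := by
  classical
  obtain ⟨v₀, hv₀, hchar₀⟩ := h
  -- the common eigenspace for the small group
  set W : Submodule ℂ V :=
    ⨅ X₂ : Matrix (Fin a₂) (Fin b₂) F,
      Module.End.eigenspace (π (uGen (r ∘ ι) (c ∘ κ) hd₂ X₂)) (χ₀ ((T₂ * X₂).trace)) with hWdef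
  have hmemW : ∀ v, v ∈ W ↔ ∀ X₂, π (uGen (r ∘ ι) (c ∘ κ) hd₂ X₂) v
      = χ₀ ((T₂ * X₂).trace) • v := by
    intro v
    rw [hWdef, Submodule.mem_iInf]
    exact forall_congr' fun X₂ => Module.End.mem_eigenspace_iff
  have hv₀W : v₀ ∈ W := (hmemW v₀).mpr hchar₀
  have hWne : W ≠ ⊥ := by
    intro hbot
    rw [hbot, Submodule.mem_bot] at hv₀W
    exact hv₀ hv₀W
  -- commuting family for the big group
  set f : Matrix (Fin a) (Fin b) F → Module.End ℂ V := fun Y => π (uGen r c hd Y) with hfdef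
  have hcomm : ∀ Y Y', Commute (f Y) (f Y') := by
    intro Y Y'
    show f Y * f Y' = f Y' * f Y
    rw [hfdef]
    simp only []
    rw [← _root_.map_mul, ← _root_.map_mul, uGen_mul, uGen_mul, add_comm]
  have hsmall_eq : ∀ X₂ : Matrix (Fin a₂) (Fin b₂) F, uGen (r ∘ ι) (c ∘ κ) hd₂ X₂
      = uGen r c hd (sel (F := F) ι * X₂ * (sel (F := F) κ)ᵀ) := fun X₂ => uGen_comp r c hd ι κ hd₂ X₂
  have hinvW : ∀ Y, ∀ w ∈ W, f Y w ∈ W := by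
    intro Y w hw
    rw [hmemW] at hw ⊢
    intro X₂
    have hc : uGen (r ∘ ι) (c ∘ κ) hd₂ X₂ * uGen r c hd Y
        = uGen r c hd Y * uGen (r ∘ ι) (c ∘ κ) hd₂ X₂ := by
      rw [hsmall_eq X₂, uGen_mul, uGen_mul, add_comm]
    calc π (uGen (r ∘ ι) (c ∘ κ) hd₂ X₂) (f Y w)
        = π (uGen (r ∘ ι) (c ∘ κ) hd₂ X₂ * uGen r c hd Y) w := by
          rw [_root_.map_mul]; rfl
      _ = π (uGen r c hd Y * uGen (r ∘ ι) (c ∘ κ) hd₂ X₂) w := by rw [hc]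
      _ = f Y (π (uGen (r ∘ ι) (c ∘ κ) hd₂ X₂) w) := by rw [_root_.map_mul]; rfl
      _ = χ₀ ((T₂ * X₂).trace) • f Y w := by rw [hw X₂, _root_.map_smul]
  obtain ⟨v, hv0, hvW, heig⟩ := exists_common_eigenvector f hcomm W hWne hinvW
  -- the eigenvalue function is an additive character
  choose μ hμ using heig
  have hμ0 : μ 0 = 1 := by
    have h0 : f 0 v = v := by
      have : uGen r c hd (0 : Matrix (Fin a) (Fin b) F) = 1 := by
        refine Units.ext ?_
        show 1 + place r c 0 = 1
        unfold place
        simp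
      rw [hfdef]; simp only []; rw [this, _root_.map_one, Module.End.one_apply]
    have := (hμ 0).symm.trans h0
    have h1 : μ 0 • v = (1 : ℂ) • v := by rw [this, one_smul]
    exact smul_left_injective ℂ hv0 h1
  have hμadd : ∀ Y Y', μ (Y + Y') = μ Y * μ Y' := by
    intro Y Y'
    have h1 : f (Y + Y') v = (μ Y * μ Y') • v := by
      have : f (Y + Y') = f Y * f Y' := by
        rw [hfdef]; simp only []; rw [← _root_.map_mul, uGen_mul]
      rw [this]
      calc (f Y * f Y') v = f Y (f Y' v) := rfl
        _ = f Y (μ Y' • v) := by rw [hμ Y']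
        _ = μ Y' • f Y v := by rw [_root_.map_smul]
        _ = μ Y' • (μ Y • v) := by rw [hμ Y]
        _ = (μ Y * μ Y') • v := by rw [smul_smul, mul_comm]
    exact smul_left_injective ℂ hv0 ((hμ (Y + Y')).symm.trans h1)
  set ψ : AddChar (Matrix (Fin a) (Fin b) F) ℂ :=
    { toFun := μ, map_zero_eq_one' := hμ0, map_add_eq_mul' := hμadd } with hψdef
  obtain ⟨T, hT⟩ := gammaChar_surjective χ₀ hχ₀ ψ
  have hμT : ∀ Y, μ Y = χ₀ ((T * Y).trace) := by
    intro Y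
    have := congrArg (fun χ => χ Y) hT
    exact this.symm
  refine ⟨T, ⟨v, hv0, fun Y => by rw [← hμT Y]; exact hμ Y⟩, ?_⟩
  -- corner identification
  apply gammaChar_injective χ₀ hχ₀
  ext X₂
  rw [gammaChar_apply, gammaChar_apply]
  have h1 : π (uGen (r ∘ ι) (c ∘ κ) hd₂ X₂) v = χ₀ ((T₂ * X₂).trace) • v :=
    (hmemW v).mp hvW X₂
  have h2 : π (uGen (r ∘ ι) (c ∘ κ) hd₂ X₂) v
      = χ₀ ((T.submatrix κ ι * X₂).trace) • v := by
    rw [hsmall_eq X₂, ← trace_corner ι κ T X₂]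
    rw [show π (uGen r c hd (sel (F := F) ι * X₂ * (sel (F := F) κ)ᵀ)) v
        = μ (sel (F := F) ι * X₂ * (sel (F := F) κ)ᵀ) • v from hμ _, hμT]
  exact smul_left_injective ℂ hv0 (h2.symm.trans h1)



/-! ### Extending injections to permutations -/

lemma exists_perm_comp {α β : Type} [Fintype α] [Fintype β] [DecidableEq α] [DecidableEq β]
    {f g : α → β} (hf : Function.Injective f) (hg : Function.Injective g) :
    ∃ σ : Equiv.Perm β, ∀ x, σ (f x) = g x := by
  classical
  have hcard : Fintype.card ((Set.range f)ᶜ : Set β) = Fintype.card ((Set.range g)ᶜ : Set β) := by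
    rw [Fintype.card_compl_set, Fintype.card_compl_set,
      Fintype.card_congr (Equiv.ofInjective f hf).symm,
      Fintype.card_congr (Equiv.ofInjective g hg).symm]
  let ce : ((Set.range f)ᶜ : Set β) ≃ ((Set.range g)ᶜ : Set β) := Fintype.equivOfCardEq hcard
  let Ef : α ⊕ ((Set.range f)ᶜ : Set β) ≃ β :=
    (Equiv.sumCongr (Equiv.ofInjective f hf) (Equiv.refl _)).trans
      (Equiv.Set.sumCompl (Set.range f))
  let Eg : α ⊕ ((Set.range g)ᶜ : Set β) ≃ β :=
    (Equiv.sumCongr (Equiv.ofInjective g hg) (Equiv.refl _)).trans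
      (Equiv.Set.sumCompl (Set.range g))
  refine ⟨Ef.symm.trans ((Equiv.sumCongr (Equiv.refl α) ce).trans Eg), fun x => ?_⟩
  have h1 : Ef (Sum.inl x) = f x := by
    simp [Ef, Equiv.Set.sumCompl_apply_inl]
  have h2 : Ef.symm (f x) = Sum.inl x := by rw [Equiv.symm_apply_eq, h1]
  simp only [Equiv.trans_apply, h2, Equiv.sumCongr_apply, Equiv.coe_refl, Sum.map_inl, id_eq]
  simp [Eg, Equiv.Set.sumCompl_apply_inl]

lemma sumElim_injective {a b n : ℕ} {f : Fin a → Fin n} {g : Fin b → Fin n}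
    (hf : Function.Injective f) (hg : Function.Injective g)
    (hd : ∀ i j, f i ≠ g j) : Function.Injective (Sum.elim f g) := by
  rintro (i | i) (j | j) h <;> simp only [Sum.elim_inl, Sum.elim_inr] at h
  · rw [hf h]
  · exact absurd h (hd i j)
  · exact absurd h.symm (hd j i)
  · rw [hg h]

/-! ### Rank and submatrix selection -/

lemma rank_eq_finrank_span_transpose {p q : ℕ} (A : Matrix (Fin p) (Fin q) F) :
    A.rank = Module.finrank F (Submodule.span F (Set.range Aᵀ)) :=
  Matrix.rank_eq_finrank_span_cols A

lemma exists_cols_rank {p q k : ℕ} (M : Matrix (Fin p) (Fin q) F) (hk : M.rank = k) :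
    ∃ c : Fin k → Fin q, Function.Injective c ∧ (M.submatrix id c).rank = k := by
  classical
  obtain ⟨t, hts, hspan, hli⟩ := exists_linearIndependent F (Set.range Mᵀ)
  have htfin : t.Finite := (Set.finite_range Mᵀ).subset hts
  letI : Fintype t := htfin.fintype
  have hcard : Fintype.card t = k := by
    have h1 : Module.finrank F (Submodule.span F t) = t.toFinset.card :=
      finrank_span_set_eq_card hli
    have h2 : Module.finrank F (Submodule.span F t) = k := by
      rw [hspan, ← rank_eq_finrank_span_transpose, hk]
    rw [← h2, h1, Set.toFinset_card]
  let e : Fin k ≃ t := (Fintype.equivFinOfCardEq hcard).symm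
  have hchoice : ∀ i : Fin k, ∃ j : Fin q, Mᵀ j = (e i : Fin p → F) := fun i => hts (e i).2
  choose c hc using hchoice
  have hcinj : Function.Injective c := by
    intro i i' h
    have : (e i : Fin p → F) = (e i' : Fin p → F) := by rw [← hc i, ← hc i', h]
    exact e.injective (Subtype.ext this)
  refine ⟨c, hcinj, ?_⟩
  have hrange : Set.range (M.submatrix id c)ᵀ = (t : Set (Fin p → F)) := by
    ext z
    constructor
    · rintro ⟨i, rfl⟩
      have : (M.submatrix id c)ᵀ i = Mᵀ (c i) := by
        ext u; simp [Matrix.transpose_apply, Matrix.submatrix_apply]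
      rw [this, hc i]
      exact (e i).2
    · intro hz
      refine ⟨e.symm ⟨z, hz⟩, ?_⟩
      have : (M.submatrix id c)ᵀ (e.symm ⟨z, hz⟩) = Mᵀ (c (e.symm ⟨z, hz⟩)) := by
        ext u; simp [Matrix.transpose_apply, Matrix.submatrix_apply]
      rw [this, hc (e.symm ⟨z, hz⟩)]
      simp
  rw [rank_eq_finrank_span_transpose, hrange, hspan, ← rank_eq_finrank_span_transpose, hk]

lemma exists_square_submatrix_rank {p q k : ℕ} (M : Matrix (Fin p) (Fin q) F)
    (hk : M.rank = k) :
    ∃ (rs : Fin k → Fin p) (cs : Fin k → Fin q), Function.Injective rs ∧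
      Function.Injective cs ∧ (M.submatrix rs cs).rank = k := by
  obtain ⟨c, hcinj, hcrank⟩ := exists_cols_rank M hk
  have htrank : ((M.submatrix id c)ᵀ).rank = k := by
    rw [Matrix.rank_transpose, hcrank]
  obtain ⟨r, hrinj, hrrank⟩ := exists_cols_rank ((M.submatrix id c)ᵀ) htrank
  refine ⟨r, c, hrinj, hcinj, ?_⟩
  have heq : ((M.submatrix id c)ᵀ.submatrix id r)ᵀ = M.submatrix r c := by
    ext i j
    simp [Matrix.transpose_apply, Matrix.submatrix_apply]
  rw [← heq, Matrix.rank_transpose, hrrank]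



/-! ### The `glEmbed` bridge -/

section Bridge

variable {m n : ℕ}

/-- The equivalence used in `glEmbed`. -/
def eEquiv (hmn : m ≤ n) : Fin m ⊕ Fin (n - m) ≃ Fin n :=
  (finSumFinEquiv (m := m) (n := n - m)).trans (finCongr (by omega))

/-- The corner embedding `Fin m → Fin n`. -/
def embm (hmn : m ≤ n) : Fin m → Fin n := fun i => eEquiv hmn (Sum.inl i)

lemma embm_injective (hmn : m ≤ n) : Function.Injective (embm hmn) := fun i j h =>
  Sum.inl_injective ((eEquiv hmn).injective h)

lemma reindex_corner (hmn : m ≤ n) (B : Matrix (Fin m) (Fin m) F) :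
    (Matrix.reindexAlgEquiv F F (eEquiv hmn))
        (Matrix.fromBlocks B 0 0 (0 : Matrix (Fin (n - m)) (Fin (n - m)) F))
      = sel (F := F) (embm hmn) * B * (sel (F := F) (embm hmn))ᵀ := by
  have hrhs : sel (F := F) (embm hmn) * B * (sel (F := F) (embm hmn))ᵀ = place (embm hmn) (embm hmn) B :=
    rfl
  rw [hrhs]
  ext p q
  rw [place_apply]
  have hlhs : (Matrix.reindexAlgEquiv F F (eEquiv hmn))
      (Matrix.fromBlocks B 0 0 (0 : Matrix (Fin (n - m)) (Fin (n - m)) F)) p q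
      = Matrix.fromBlocks B 0 0 (0 : Matrix (Fin (n - m)) (Fin (n - m)) F)
          ((eEquiv hmn).symm p) ((eEquiv hmn).symm q) := rfl
  rw [hlhs]
  have hcond : ∀ (x : Fin n) (i : Fin m), (x = embm hmn i) ↔ ((eEquiv hmn).symm x = Sum.inl i) := by
    intro x i
    rw [Equiv.symm_apply_eq]
    exact ⟨fun h => h, fun h => h⟩
  rcases hp : (eEquiv hmn).symm p with i | i <;> rcases hq : (eEquiv hmn).symm q with u | u
  · rw [Matrix.fromBlocks_apply₁₁]
    rw [Finset.sum_eq_single i]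
    · rw [Finset.sum_eq_single u]
      · rw [if_pos]
        exact ⟨(hcond p i).mpr hp, (hcond q u).mpr hq⟩
      · intro j _ hj
        rw [if_neg]
        rintro ⟨-, h2⟩
        rw [hcond q j] at h2
        rw [hq] at h2
        exact hj (Sum.inl_injective h2.symm)
      · simp
    · intro i' _ hi'
      apply Finset.sum_eq_zero
      intro j _
      rw [if_neg]
      rintro ⟨h1, -⟩
      rw [hcond p i'] at h1
      rw [hp] at h1
      exact hi' (Sum.inl_injective h1.symm)
    · simp
  · rw [Matrix.fromBlocks_apply₁₂]
    symm
    apply Finset.sum_eq_zero; intro i' _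
    apply Finset.sum_eq_zero; intro j _
    rw [if_neg]
    rintro ⟨-, h2⟩
    rw [hcond q j, hq] at h2
    exact Sum.inr_ne_inl h2
  · rw [Matrix.fromBlocks_apply₂₁]
    symm
    apply Finset.sum_eq_zero; intro i' _
    apply Finset.sum_eq_zero; intro j _
    rw [if_neg]
    rintro ⟨h1, -⟩
    rw [hcond p i', hp] at h1
    exact Sum.inr_ne_inl h1
  · rw [Matrix.fromBlocks_apply₂₂]
    symm
    apply Finset.sum_eq_zero; intro i' _
    apply Finset.sum_eq_zero; intro j _
    rw [if_neg]
    rintro ⟨h1, -⟩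
    rw [hcond p i', hp] at h1
    exact Sum.inr_ne_inl h1

lemma glEmbed_uU (hmn : m ≤ n) {a b : ℕ} (hab : a + b ≤ m) (X : Matrix (Fin a) (Fin b) F)
    (hd' : ∀ i j, (embm hmn ∘ rStd m a (by omega)) i ≠ (embm hmn ∘ cStd m b (by omega)) j) :
    glEmbed (F := F) hmn (uU m a b hab X)
      = uGen (embm hmn ∘ rStd m a (by omega)) (embm hmn ∘ cStd m b (by omega)) hd' X := by
  refine Units.ext ?_
  have hval : (glEmbed (F := F) hmn (uU m a b hab X)).val
      = (Matrix.reindexAlgEquiv F F (eEquiv hmn))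
          (Matrix.fromBlocks (1 + blockEmbed m a b X) 0 0 1) := rfl
  rw [hval]
  show _ = 1 + place (embm hmn ∘ rStd m a (by omega)) (embm hmn ∘ cStd m b (by omega)) X
  have hsplit : Matrix.fromBlocks (1 + blockEmbed m a b X) 0 0
        (1 : Matrix (Fin (n - m)) (Fin (n - m)) F)
      = 1 + Matrix.fromBlocks (blockEmbed m a b X) 0 0 0 := by
    rw [show (1 : Matrix (Fin m ⊕ Fin (n - m)) (Fin m ⊕ Fin (n - m)) F)
        = Matrix.fromBlocks 1 0 0 1 from Matrix.fromBlocks_one.symm,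
      Matrix.fromBlocks_add]
    congr 1 <;> simp
  rw [hsplit, _root_.map_add, _root_.map_one, reindex_corner]
  congr 1
  rw [blockEmbed_eq_place hab]
  show sel (F := F) (embm hmn) * (sel (F := F) (rStd m a (by omega)) * X * (sel (F := F) (cStd m b (by omega)))ᵀ)
      * (sel (F := F) (embm hmn))ᵀ = _
  unfold place
  rw [← sel_mul_sel (embm hmn) (rStd m a (by omega)),
    ← sel_mul_sel (embm hmn) (cStd m b (by omega)), Matrix.transpose_mul]
  simp only [Matrix.mul_assoc]

end Bridge



/-! ### Misc glue -/

lemma charAppearsGen_congr (χ₀ : AddChar F ℂ) {n : ℕ} (π : Representation ℂ (GL (Fin n) F) V)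
    {a b : ℕ} {r r' : Fin a → Fin n} {c c' : Fin b → Fin n}
    {hd : ∀ i j, r i ≠ c j} {hd' : ∀ i j, r' i ≠ c' j} {T : Matrix (Fin b) (Fin a) F}
    (hr : r = r') (hc : c = c') (h : CharAppearsGen χ₀ π r c hd T) :
    CharAppearsGen χ₀ π r' c' hd' T := by
  subst hr; subst hc; exact h

lemma charAppears_restrict_iff (χ₀ : AddChar F ℂ) {m n : ℕ} (hmn : m ≤ n)
    (π : Representation ℂ (GL (Fin n) F) V) {a b : ℕ} (hab : a + b ≤ m)
    (hd' : ∀ i j, (embm hmn ∘ rStd m a (by omega)) i ≠ (embm hmn ∘ cStd m b (by omega)) j)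
    (T : Matrix (Fin b) (Fin a) F) :
    CharAppears χ₀ (π.comp (glEmbed hmn)) hab T ↔
      CharAppearsGen χ₀ π (embm hmn ∘ rStd m a (by omega))
        (embm hmn ∘ cStd m b (by omega)) hd' T := by
  unfold CharAppears CharAppearsGen
  refine exists_congr fun v => and_congr_right fun _ => forall_congr' fun X => ?_
  rw [show (π.comp (glEmbed hmn)) (uU m a b hab X) = π (glEmbed hmn (uU m a b hab X)) from rfl,
    glEmbed_uU hmn hab X hd']


/-- Proposition 6.1.1.  Here `k < (n-1)/2` and `k < (m-1)/2`
are expressed as `2*k + 1 < n` and `2*k + 1 < m`. -/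
theorem uRank_restrict
    (χ₀ : AddChar F ℂ) (hχ₀ : χ₀ ≠ 1)
    {n m : ℕ} (hmn : m ≤ n)
    {V : Type} [AddCommGroup V] [Module ℂ V] [FiniteDimensional ℂ V]
    (π : Representation ℂ (GL (Fin n) F) V)
    {k : ℕ} (hπ : HasURank χ₀ π k)
    (hkn : 2 * k + 1 < n) (hkm : 2 * k + 1 < m) :
    HasURank χ₀ (π.comp (glEmbed hmn)) k := by
  classical
  unfold HasURank HasRankAB at hπ ⊢
  -- abbreviations
  have ham : m / 2 ≤ n / 2 := by omega
  have hbm : m - m / 2 ≤ n - n / 2 := by omega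
  have hkam : k ≤ m / 2 := by omega
  have hkbm : k ≤ m - m / 2 := by omega
  have hkan : k ≤ n / 2 := by omega
  have hkbn : k ≤ n - n / 2 := by omega
  set RN : Fin (n / 2) → Fin n := rStd n (n / 2) (by omega) with hRN
  set CN : Fin (n - n / 2) → Fin n := cStd n (n - n / 2) (by omega) with hCN
  set Rm : Fin (m / 2) → Fin n := embm hmn ∘ rStd m (m / 2) (by omega) with hRm
  set Cm : Fin (m - m / 2) → Fin n := embm hmn ∘ cStd m (m - m / 2) (by omega) with hCm
  have hdN : ∀ i j, RN i ≠ CN j := fun i j => rStd_ne_cStd (by omega) i j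
  have hdm : ∀ i j, Rm i ≠ Cm j := fun i j h =>
    rStd_ne_cStd (show m / 2 + (m - m / 2) ≤ m by omega) i j (embm_injective hmn h)
  have hRNinj : Function.Injective RN := rStd_injective n (n / 2) (by omega)
  have hCNinj : Function.Injective CN := cStd_injective n (n - n / 2) (by omega)
  have hRminj : Function.Injective Rm :=
    (embm_injective hmn).comp (rStd_injective m (m / 2) (by omega))
  have hCminj : Function.Injective Cm :=
    (embm_injective hmn).comp (cStd_injective m (m - m / 2) (by omega))
  -- upper bound
  have hupper : ∀ T : Matrix (Fin (m - m / 2)) (Fin (m / 2)) F,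
      CharAppearsGen χ₀ π Rm Cm hdm T → T.rank ≤ k := by
    intro T hT
    set ι : Fin (m / 2) → Fin (n / 2) := Fin.castLE ham with hι
    set κ : Fin (m - m / 2) → Fin (n - n / 2) :=
      (fun j => ⟨(n - n / 2) - (m - m / 2) + (j : ℕ), by omega⟩) with hκ
    have hιinj : Function.Injective ι := Fin.castLE_injective ham
    have hκinj : Function.Injective κ := by
      intro i j h
      have := congrArg Fin.val h
      simp only [hκ] at this
      exact Fin.ext (by omega)
    have hdc : ∀ i j, (RN ∘ ι) i ≠ (CN ∘ κ) j := fun i j h => hdN (ι i) (κ j) h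
    obtain ⟨σ, hσ⟩ := exists_perm_comp
      (sumElim_injective hRminj hCminj hdm)
      (sumElim_injective (hRNinj.comp hιinj) (hCNinj.comp hκinj) hdc)
    have hr : ⇑σ ∘ Rm = RN ∘ ι := funext fun i => hσ (Sum.inl i)
    have hc : ⇑σ ∘ Cm = CN ∘ κ := funext fun j => hσ (Sum.inr j)
    have hdσ : ∀ i j, (⇑σ ∘ Rm) i ≠ (⇑σ ∘ Cm) j := fun i j h =>
      hdm i j (σ.injective h)
    have hT2 := charAppearsGen_perm χ₀ π σ hdσ hT
    have hT3 : CharAppearsGen χ₀ π (RN ∘ ι) (CN ∘ κ) hdc T :=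
      charAppearsGen_congr χ₀ π hr hc hT2
    obtain ⟨T', hT'a, hT'sub⟩ := charAppearsGen_extend χ₀ hχ₀ π hdN ι κ hT3
    have hle := hπ.2 T' ((charAppears_iff_gen χ₀ π (by omega) T').mpr hT'a)
    calc T.rank = (T'.submatrix κ ι).rank := by rw [hT'sub]
      _ ≤ T'.rank := rank_submatrix_le' κ ι T'
      _ ≤ k := hle
  -- existence
  obtain ⟨T', hT'app, hT'rank⟩ := hπ.1
  have hT'gen : CharAppearsGen χ₀ π RN CN hdN T' :=
    (charAppears_iff_gen χ₀ π (by omega) T').mp hT'app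
  obtain ⟨rs, cs, hrsinj, hcsinj, hsubrank⟩ := exists_square_submatrix_rank T' hT'rank
  obtain ⟨τ, hτ⟩ := exists_perm_comp (Fin.castLE_injective hkbn) hrsinj
  obtain ⟨τ', hτ'⟩ := exists_perm_comp (Fin.castLE_injective hkan) hcsinj
  set κh : Fin (m - m / 2) → Fin (n - n / 2) := ⇑τ ∘ Fin.castLE hbm with hκh
  set ιh : Fin (m / 2) → Fin (n / 2) := ⇑τ' ∘ Fin.castLE ham with hιh
  have hκhinj : Function.Injective κh := τ.injective.comp (Fin.castLE_injective hbm)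
  have hιhinj : Function.Injective ιh := τ'.injective.comp (Fin.castLE_injective ham)
  have hκhrs : ∀ t : Fin k, κh (Fin.castLE hkbm t) = rs t := by
    intro t
    have h1 : Fin.castLE hbm (Fin.castLE hkbm t) = Fin.castLE hkbn t := rfl
    rw [hκh]
    show τ (Fin.castLE hbm (Fin.castLE hkbm t)) = rs t
    rw [h1]
    exact hτ t
  have hιhcs : ∀ t : Fin k, ιh (Fin.castLE hkam t) = cs t := by
    intro t
    have h1 : Fin.castLE ham (Fin.castLE hkam t) = Fin.castLE hkan t := rfl
    rw [hιh]
    show τ' (Fin.castLE ham (Fin.castLE hkam t)) = cs t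
    rw [h1]
    exact hτ' t
  set T₂ : Matrix (Fin (m - m / 2)) (Fin (m / 2)) F := T'.submatrix κh ιh with hT₂
  have hr2 : T₂.submatrix (Fin.castLE hkbm) (Fin.castLE hkam) = T'.submatrix rs cs := by
    rw [hT₂, Matrix.submatrix_submatrix]
    have e1 : κh ∘ Fin.castLE hkbm = rs := funext hκhrs
    have e2 : ιh ∘ Fin.castLE hkam = cs := funext hιhcs
    rw [e1, e2]
  have hrank_ge : k ≤ T₂.rank := by
    rw [← hsubrank, ← hr2]
    exact rank_submatrix_le' _ _ T₂
  have hdc2 : ∀ i j, (RN ∘ ιh) i ≠ (CN ∘ κh) j := fun i j h => hdN (ιh i) (κh j) h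
  have hcorner := charAppearsGen_corner χ₀ π ιh κh hdc2 hT'gen
  obtain ⟨σ, hσ⟩ := exists_perm_comp
    (sumElim_injective (hRNinj.comp hιhinj) (hCNinj.comp hκhinj) hdc2)
    (sumElim_injective hRminj hCminj hdm)
  have hr : ⇑σ ∘ (RN ∘ ιh) = Rm := funext fun i => hσ (Sum.inl i)
  have hc : ⇑σ ∘ (CN ∘ κh) = Cm := funext fun j => hσ (Sum.inr j)
  have hdσ : ∀ i j, (⇑σ ∘ (RN ∘ ιh)) i ≠ (⇑σ ∘ (CN ∘ κh)) j := fun i j h =>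
    hdc2 i j (σ.injective h)
  have happ : CharAppearsGen χ₀ π Rm Cm hdm T₂ :=
    charAppearsGen_congr χ₀ π hr hc (charAppearsGen_perm χ₀ π σ hdσ hcorner)
  refine ⟨⟨T₂, ?_, le_antisymm (hupper T₂ happ) hrank_ge⟩, ?_⟩
  · exact (charAppears_restrict_iff χ₀ hmn π (by omega) hdm T₂).mpr happ
  · intro T hT
    exact hupper T ((charAppears_restrict_iff χ₀ hmn π (by omega) hdm T).mp hT)

end Stmt8
end

section
/- Let F be a field and (W,B) a symplectic vector space over F with dim W = 2n (B a nondegenerate alternating bilinear form). Equip W ⊕ W with the symplectic form B̃((w₁,w₂),(w₁',w₂')) = B(w₁,w₁') − B(w₂,w₂'). If M and L are Lagrangian subspaces of (W⊕W, B̃) (i.e., totally isotropic subspaces of dimension 2n), then the composition M∘L := {(w,w') ∈ W⊕W : there exists w'' ∈ W with (w,w'') ∈ L and (w'',w') ∈ M} is again a Lagrangian subspace of (W⊕W, B̃). -/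
/-!
STATEMENT 10: For a symplectic vector space (W,B) of dimension 2n over a field
F, and W ⊕ W equipped with the difference form B̃, the composition M ∘ L of two
Lagrangian subspaces of (W ⊕ W, B̃) is again a Lagrangian subspace.
-/

set_option linter.unusedSectionVars false
set_option maxHeartbeats 1000000
set_option maxSynthPendingDepth 3
set_option synthInstance.maxHeartbeats 400000

namespace Stmt10

variable {F W : Type} [Field F] [AddCommGroup W] [Module F W]

/-- The difference form `B̃((w₁,w₂),(w₁',w₂')) = B(w₁,w₁') − B(w₂,w₂')` on
`W ⊕ W`. -/
def doubleForm (B : W →ₗ[F] W →ₗ[F] F) (p q : W × W) : F :=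
  B p.1 q.1 - B p.2 q.2

/-- A Lagrangian subspace of `(W ⊕ W, B̃)` for `dim W = 2n`: totally isotropic
of dimension `2n`. -/
def IsLagrangian (B : W →ₗ[F] W →ₗ[F] F) (nn : ℕ) (L : Submodule F (W × W)) : Prop :=
  Module.finrank F ↥L = nn ∧ ∀ p ∈ L, ∀ q ∈ L, doubleForm B p q = 0

/-- The composition `M ∘ L = {(w,w') | ∃ w'', (w,w'') ∈ L ∧ (w'',w') ∈ M}`. -/
def composeLag (M L : Submodule F (W × W)) : Submodule F (W × W) where
  carrier := {p | ∃ w'' : W, (p.1, w'') ∈ L ∧ (w'', p.2) ∈ M}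
  add_mem' := by
    rintro p q ⟨a, ha1, ha2⟩ ⟨b, hb1, hb2⟩
    exact ⟨a + b, L.add_mem ha1 hb1, M.add_mem ha2 hb2⟩
  zero_mem' := ⟨0, L.zero_mem, M.zero_mem⟩
  smul_mem' := by
    rintro c p ⟨a, h1, h2⟩
    exact ⟨c • a, L.smul_mem c h1, M.smul_mem c h2⟩

/-- The difference form as a bilinear map. -/
def dblForm (B : W →ₗ[F] W →ₗ[F] F) : LinearMap.BilinForm F (W × W) :=
  LinearMap.mk₂ F (fun p q => B p.1 q.1 - B p.2 q.2)
    (fun p p' q => by simp [Prod.fst_add, Prod.snd_add]; ring)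
    (fun c p q => by simp [smul_eq_mul]; ring)
    (fun p q q' => by simp; ring)
    (fun c p q => by simp [smul_eq_mul]; ring)

lemma dblForm_apply (B : W →ₗ[F] W →ₗ[F] F) (p q : W × W) :
    dblForm B p q = B p.1 q.1 - B p.2 q.2 := rfl

/-- (Proposition 7.3.7 i)): the composition of two Lagrangian
subspaces of `(W ⊕ W, B̃)` is Lagrangian. -/
theorem composeLag_isLagrangian
    [FiniteDimensional F W] {n : ℕ} (hW : Module.finrank F W = 2 * n)
    (B : W →ₗ[F] W →ₗ[F] F)
    (halt : ∀ w : W, B w w = 0)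
    (hnondeg : ∀ w : W, (∀ u : W, B w u = 0) → w = 0)
    (M L : Submodule F (W × W))
    (hM : IsLagrangian B (2 * n) M) (hL : IsLagrangian B (2 * n) L) :
    IsLagrangian B (2 * n) (composeLag M L) := by
  classical
  -- skew-symmetry
  have hskew : ∀ x y : W, B x y = - B y x := by
    intro x y
    have h := halt (x + y)
    simp only [map_add, LinearMap.add_apply, halt] at h
    linear_combination h
  have hrefl : LinearMap.BilinForm.IsRefl B := by
    intro x y h
    rw [hskew y x, h, neg_zero]
  have hBnd : LinearMap.BilinForm.Nondegenerate B :=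
    (LinearMap.IsRefl.nondegenerate_iff_separatingLeft hrefl).mpr hnondeg
  -- isotropy of the composition
  have hiso : ∀ p ∈ composeLag M L, ∀ q ∈ composeLag M L, doubleForm B p q = 0 := by
    rintro p ⟨u, hpu, hup⟩ q ⟨v, hqv, hvq⟩
    have h1 := hL.2 _ hpu _ hqv
    have h2 := hM.2 _ hup _ hvq
    unfold doubleForm at h1 h2 ⊢
    simp only at h1 h2
    linear_combination h1 + h2
  refine ⟨?_, hiso⟩
  -- the bilinear form on W × W
  set Bt : LinearMap.BilinForm F (W × W) := dblForm B with hBt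
  have hBtrefl : Bt.IsRefl := by
    intro p q h
    rw [dblForm_apply] at h ⊢
    rw [hskew q.1 p.1, hskew q.2 p.2]
    linear_combination -h
  have hBtnd : Bt.Nondegenerate := by
    refine (LinearMap.IsRefl.nondegenerate_iff_separatingLeft hBtrefl).mpr ?_
    intro p hp
    have h1 : p.1 = 0 := by
      refine hnondeg p.1 fun u => ?_
      have := hp (u, 0)
      simp only [hBt, dblForm_apply, map_zero, LinearMap.zero_apply] at this
      linear_combination this
    have h2 : p.2 = 0 := by
      refine hnondeg p.2 fun u => ?_
      have := hp (0, u)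
      simp only [hBt, dblForm_apply, map_zero, LinearMap.zero_apply] at this
      linear_combination -this
    exact Prod.ext h1 h2
  have hWW : Module.finrank F (W × W) = 4 * n := by
    rw [Module.finrank_prod, hW]; ring
  -- upper bound : composeLag is isotropic hence of dim ≤ 2n
  have hle : composeLag M L ≤ Bt.orthogonal (composeLag M L) := by
    intro x hx
    rw [LinearMap.BilinForm.mem_orthogonal_iff]
    intro y hy
    exact hiso y hy x hx
  have hupper : Module.finrank F ↥(composeLag M L) ≤ 2 * n := by
    have h1 := Submodule.finrank_mono hle
    have h2 := LinearMap.BilinForm.finrank_orthogonal hBtnd (composeLag M L)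
    have h3 : Module.finrank F ↥(composeLag M L) ≤ Module.finrank F (W × W) :=
      Submodule.finrank_le _
    omega
  -- lower bound
  set S : Submodule F W := L.map (LinearMap.snd F W W) ⊔ M.map (LinearMap.fst F W W) with hS
  set K : Submodule F W := L.comap (LinearMap.inr F W W) ⊓ M.comap (LinearMap.inl F W W) with hK
  have hKS : K ≤ LinearMap.BilinForm.orthogonal B S := by
    rintro u ⟨hu1, hu2⟩
    rw [LinearMap.BilinForm.mem_orthogonal_iff]
    have : S ≤ LinearMap.ker (B.flip u) := by
      rw [hS]
      refine sup_le ?_ ?_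
      · rintro _ ⟨l, hl, rfl⟩
        have := hL.2 _ hl _ hu1
        unfold doubleForm at this
        simp only [LinearMap.inr_apply, map_zero] at this
        simp only [LinearMap.mem_ker, LinearMap.flip_apply, LinearMap.snd_apply]
        linear_combination -this
      · rintro _ ⟨m, hm, rfl⟩
        have := hM.2 _ hm _ hu2
        unfold doubleForm at this
        simp only [LinearMap.inl_apply, map_zero] at this
        simp only [LinearMap.mem_ker, LinearMap.flip_apply, LinearMap.fst_apply]
        linear_combination this
    intro s hs
    exact this hs
  have hKfin : Module.finrank F ↥K + Module.finrank F ↥S ≤ 2 * n := by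
    have h1 := Submodule.finrank_mono hKS
    have h2 := LinearMap.BilinForm.finrank_orthogonal hBnd S
    have h3 : Module.finrank F ↥S ≤ Module.finrank F W := Submodule.finrank_le _
    omega
  -- the map σ : L × M → W, (l, m) ↦ l.2 - m.1
  set σ : (↥L × ↥M) →ₗ[F] W :=
    ((LinearMap.snd F W W).comp L.subtype).comp (LinearMap.fst F ↥L ↥M)
      - ((LinearMap.fst F W W).comp M.subtype).comp (LinearMap.snd F ↥L ↥M) with hσ
  have hσapp : ∀ x : ↥L × ↥M, σ x = (x.1 : W × W).2 - (x.2 : W × W).1 := fun x => rfl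
  have hrangeσ : LinearMap.range σ = S := by
    apply le_antisymm
    · rintro _ ⟨⟨l, m⟩, rfl⟩
      exact sub_mem (Submodule.mem_sup_left ⟨l.1, l.2, rfl⟩)
        (Submodule.mem_sup_right ⟨m.1, m.2, rfl⟩)
    · refine sup_le ?_ ?_
      · rintro _ ⟨l, hl, rfl⟩
        exact ⟨(⟨l, hl⟩, 0), by simp [hσapp]⟩
      · rintro _ ⟨m, hm, rfl⟩
        exact ⟨(0, -⟨m, hm⟩), by simp [hσapp]⟩
  -- the map τ : L × M → W × W, (l, m) ↦ (l.1, m.2)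
  set τ : (↥L × ↥M) →ₗ[F] (W × W) :=
    LinearMap.prod (((LinearMap.fst F W W).comp L.subtype).comp (LinearMap.fst F ↥L ↥M))
      (((LinearMap.snd F W W).comp M.subtype).comp (LinearMap.snd F ↥L ↥M)) with hτ
  have hτapp : ∀ x : ↥L × ↥M, τ x = ((x.1 : W × W).1, (x.2 : W × W).2) := fun x => rfl
  set φ : ↥(LinearMap.ker σ) →ₗ[F] (W × W) := τ.domRestrict (LinearMap.ker σ) with hφ
  have hrangeφ : LinearMap.range φ = composeLag M L := by
    apply le_antisymm
    · rintro _ ⟨⟨⟨l, m⟩, hker⟩, rfl⟩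
      rw [LinearMap.mem_ker, hσapp] at hker
      have heq : (l : W × W).2 = (m : W × W).1 := sub_eq_zero.mp hker
      refine ⟨(l : W × W).2, ?_, ?_⟩
      · show ((l : W × W).1, (l : W × W).2) ∈ L
        exact l.2
      · show ((l : W × W).2, (m : W × W).2) ∈ M
        rw [heq]
        exact m.2
    · rintro ⟨a, c⟩ ⟨b, hab, hbc⟩
      refine ⟨⟨(⟨(a, b), hab⟩, ⟨(b, c), hbc⟩), ?_⟩, rfl⟩
      rw [LinearMap.mem_ker, hσapp]
      simp
  -- injection of ker φ into K
  set η : ↥(LinearMap.ker φ) →ₗ[F] W :=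
    (((LinearMap.snd F W W).comp L.subtype).comp
      ((LinearMap.fst F ↥L ↥M).comp (LinearMap.ker σ).subtype)).comp
      (LinearMap.ker φ).subtype with hη
  have hηapp : ∀ x : ↥(LinearMap.ker φ),
      η x = ((((x : ↥(LinearMap.ker σ)) : ↥L × ↥M).1 : W × W)).2 := fun x => rfl
  have hηprop : ∀ x : ↥(LinearMap.ker φ),
      (((x : ↥(LinearMap.ker σ)) : ↥L × ↥M).1 : W × W) = (0, η x) ∧
      (((x : ↥(LinearMap.ker σ)) : ↥L × ↥M).2 : W × W) = (η x, 0) := by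
    rintro ⟨⟨⟨l, m⟩, hker⟩, hkφ⟩
    rw [LinearMap.mem_ker, hσapp] at hker
    rw [LinearMap.mem_ker] at hkφ
    have hτ0 : τ ((l, m) : ↥L × ↥M) = 0 := hkφ
    rw [hτapp] at hτ0
    have h1 : (l : W × W).1 = 0 := congrArg Prod.fst hτ0
    have h2 : (m : W × W).2 = 0 := congrArg Prod.snd hτ0
    have h3 : (l : W × W).2 = (m : W × W).1 := sub_eq_zero.mp hker
    constructor
    · rw [hηapp]; exact Prod.ext h1 rfl
    · rw [hηapp]; exact Prod.ext h3.symm h2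
  have hηinj : Function.Injective η := by
    intro x y hxy
    apply Subtype.ext
    apply Subtype.ext
    apply Prod.ext
    · exact Subtype.ext (((hηprop x).1.trans (by rw [hxy])).trans ((hηprop y).1).symm)
    · exact Subtype.ext (((hηprop x).2.trans (by rw [hxy])).trans ((hηprop y).2).symm)
  have hηrange : LinearMap.range η ≤ K := by
    rintro _ ⟨x, rfl⟩
    obtain ⟨hl, hm⟩ := hηprop x
    constructor
    · show ((0 : W), η x) ∈ L
      rw [← hl]; exact (((x : ↥(LinearMap.ker σ)) : ↥L × ↥M).1).2
    · show (η x, (0 : W)) ∈ M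
      rw [← hm]; exact (((x : ↥(LinearMap.ker σ)) : ↥L × ↥M).2).2
  have hkerφK : Module.finrank F ↥(LinearMap.ker φ) ≤ Module.finrank F ↥K := by
    rw [← LinearMap.finrank_range_of_inj hηinj]
    exact Submodule.finrank_mono hηrange
  -- rank-nullity computations
  have hrn1 := LinearMap.finrank_range_add_finrank_ker σ
  have hrn2 := LinearMap.finrank_range_add_finrank_ker φ
  have hLM : Module.finrank F (↥L × ↥M) = 4 * n := by
    rw [Module.finrank_prod, hL.1, hM.1]; ring
  rw [hLM, hrangeσ] at hrn1
  rw [hrangeφ] at hrn2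
  omega

end Stmt10
end
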